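/- arXiv:1905.12148 — 7 statements merged into one kernel-verified Lean document; each statement's English description precedes it below -/
import Mathlib

section
/- The set D is a nonempty compact perfect subset of ℝ (it is closed and has no isolated points); in particular D is uncountable. -/
open Filter Topology MeasureTheory

/-- `α` is a sequence with all terms in `Θ = {1,…,q-1} \ {u}`. -/
def ThetaSeq (q u : ℕ) (α : ℕ → ℕ) : Prop :=
  ∀ n, 1 ≤ α n ∧ α n ≤ q - 1 ∧ α n ≠ u

/-- `S_{n+1}(α) = α_1 + ⋯ + α_{n+1}` (0-indexed: `α i` is the paper's `α_{i+1}`). -/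
def Ssum (α : ℕ → ℕ) (n : ℕ) : ℕ := ∑ i ∈ Finset.range (n + 1), α i

/-- `h(α) = u/(q-1) + ∑_{n≥1} (α_n - u) q^{-S_n(α)}`. -/
noncomputable def hmap (q u : ℕ) (α : ℕ → ℕ) : ℝ :=
  (u : ℝ) / ((q : ℝ) - 1) +
    ∑' n : ℕ, ((α n : ℝ) - (u : ℝ)) / (q : ℝ) ^ (Ssum α n)

/-- `Φ(α) = ∑_{n≥1} α_n q^{-n}`. -/
noncomputable def Phi (q : ℕ) (α : ℕ → ℕ) : ℝ :=
  ∑' n : ℕ, (α n : ℝ) / (q : ℝ) ^ (n + 1)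

/-- `D = {h(α) : α ∈ Θ^{ℕ≥1}}`. -/
def Dset (q u : ℕ) : Set ℝ := {x | ∃ α, ThetaSeq q u α ∧ hmap q u α = x}

/-- `E = {Φ(α) : α ∈ Θ^{ℕ≥1}}`. -/
def Eset (q u : ℕ) : Set ℝ := {y | ∃ α, ThetaSeq q u α ∧ Phi q α = y}

namespace Stmt11Aux

variable {q u : ℕ} {α β : ℕ → ℕ}

lemma one_lt_qr (hq : 4 ≤ q) : (1:ℝ) < (q:ℝ) := by
  have : (4:ℝ) ≤ (q:ℝ) := by exact_mod_cast hq
  linarith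

lemma cast_q_sub_one (hq : 4 ≤ q) : ((q - 1 : ℕ) : ℝ) = (q:ℝ) - 1 := by
  have h : 1 ≤ q := by omega
  rw [Nat.cast_sub h]; norm_num

lemma cast_le_qsub1 (hq : 4 ≤ q) {d : ℕ} (h : d ≤ q - 1) : (d:ℝ) ≤ (q:ℝ) - 1 := by
  rw [← cast_q_sub_one hq]; exact_mod_cast h

lemma Ssum_succ (α : ℕ → ℕ) (n : ℕ) : Ssum α (n+1) = Ssum α n + α (n+1) :=
  Finset.sum_range_succ α (n+1)

lemma Ssum_strictMono (hα : ThetaSeq q u α) : StrictMono (Ssum α) :=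
  strictMono_nat_of_lt_succ fun n => by
    have := (hα (n+1)).1; rw [Ssum_succ]; omega

lemma le_Ssum (hα : ThetaSeq q u α) (n : ℕ) : n + 1 ≤ Ssum α n := by
  induction n with
  | zero => simpa [Ssum] using (hα 0).1
  | succ n ih => have := (hα (n+1)).1; rw [Ssum_succ]; omega

lemma one_le_Ssum (hα : ThetaSeq q u α) (n : ℕ) : 1 ≤ Ssum α n :=
  le_trans (by omega) (le_Ssum hα n)

open Classical in
/-- digit of `h(α)` at position `m+1` in base `q`. -/
noncomputable def dig (q u : ℕ) (α : ℕ → ℕ) (m : ℕ) : ℕ :=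
  if h : ∃ n, Ssum α n = m + 1 then α h.choose else u

lemma dig_Ssum (hα : ThetaSeq q u α) (n : ℕ) : dig q u α (Ssum α n - 1) = α n := by
  have h1 : 1 ≤ Ssum α n := one_le_Ssum hα n
  have hex : ∃ k, Ssum α k = (Ssum α n - 1) + 1 := ⟨n, by omega⟩
  rw [dig, dif_pos hex]
  have h2 := hex.choose_spec
  have h3 : hex.choose = n := (Ssum_strictMono hα).injective (by omega)
  rw [h3]

lemma dig_of_not (α : ℕ → ℕ) (m : ℕ) (h : ∀ n, Ssum α n ≠ m + 1) :
    dig q u α m = u := by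
  rw [dig, dif_neg]
  push_neg
  exact h

lemma dig_le (hu : u ≤ q - 1) (hα : ThetaSeq q u α) (m : ℕ) :
    dig q u α m ≤ q - 1 := by
  rw [dig]
  split
  · next h => exact (hα h.choose).2.1
  · exact hu

lemma exists_dig_pos (hα : ThetaSeq q u α) (M : ℕ) :
    ∃ k, M < k ∧ 1 ≤ dig q u α k := by
  refine ⟨Ssum α (M+1) - 1, ?_, ?_⟩
  · have := le_Ssum hα (M+1); omega
  · rw [dig_Ssum hα]; exact (hα (M+1)).1

lemma dig_agree (hα : ThetaSeq q u α) (hβ : ThetaSeq q u β) {N : ℕ}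
    (h : ∀ i, i ≤ N → α i = β i) {m : ℕ} (hm : m + 1 ≤ Ssum α N) :
    dig q u α m = dig q u β m := by
  have hS : ∀ k, k ≤ N → Ssum α k = Ssum β k := by
    intro k hk
    apply Finset.sum_congr rfl
    intro i hi
    rw [Finset.mem_range] at hi
    exact h i (by omega)
  by_cases hex : ∃ n, Ssum α n = m + 1
  · obtain ⟨n, hn⟩ := hex
    have hnN : n ≤ N := by
      by_contra hc
      have := Ssum_strictMono hα (show N < n by omega)
      omega
    have h1 := one_le_Ssum hα n
    have e1 : dig q u α m = α n := by
      have h2 := dig_Ssum hα n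
      rwa [show Ssum α n - 1 = m by omega] at h2
    have e2 : dig q u β m = β n := by
      have h2 := dig_Ssum hβ n
      rwa [show Ssum β n - 1 = m by rw [← hS n hnN]; omega] at h2
    rw [e1, e2, h n hnN]
  · push_neg at hex
    rw [dig_of_not α m hex, dig_of_not β m ?_]
    intro n hn
    by_cases hnN : n ≤ N
    · exact hex n (by rw [hS n hnN]; exact hn)
    · have hb := Ssum_strictMono hβ (show N < n by omega)
      have hNe : Ssum β N = Ssum α N := (hS N le_rfl).symm
      omega

lemma dig_between (hα : ThetaSeq q u α) {N m : ℕ}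
    (h1 : Ssum α N < m + 1) (h2 : m + 1 < Ssum α (N+1)) : dig q u α m = u := by
  apply dig_of_not
  intro n hn
  rcases le_or_gt n N with h | h
  · have := (Ssum_strictMono hα).monotone h; omega
  · have := (Ssum_strictMono hα).monotone (show N + 1 ≤ n by omega); omega

lemma tsum_div_pow (hq : 4 ≤ q) (c : ℝ) (N : ℕ) :
    ∑' j : ℕ, c / (q:ℝ) ^ (j + (N + 1)) = c / ((q:ℝ) - 1) / (q:ℝ) ^ N := by
  have h1 : (1:ℝ) < q := one_lt_qr hq
  have h0 : (0:ℝ) < q := by linarith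
  have hr0 : (0:ℝ) ≤ (q:ℝ)⁻¹ := by positivity
  have hr1 : (q:ℝ)⁻¹ < 1 := inv_lt_one_of_one_lt₀ h1
  have key : ∀ j : ℕ, c / (q:ℝ)^(j + (N+1)) = ((q:ℝ)⁻¹)^j * (c / (q:ℝ)^(N+1)) := by
    intro j
    rw [pow_add, inv_pow]
    have hq1 : ((q:ℝ))^j ≠ 0 := by positivity
    have hq2 : ((q:ℝ))^(N+1) ≠ 0 := by positivity
    field_simp
  rw [tsum_congr key, tsum_mul_right, tsum_geometric_of_lt_one hr0 hr1]
  have hq1 : (q:ℝ) - 1 ≠ 0 := by linarith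
  have hqN : (q:ℝ)^N ≠ 0 := by positivity
  have hinv : 1 - (q:ℝ)⁻¹ ≠ 0 := by
    intro hc
    have : (q:ℝ)⁻¹ = 1 := by linarith
    rw [this] at hr1; linarith
  rw [pow_succ]
  field_simp

lemma summable_div_pow (hq : 4 ≤ q) {f : ℕ → ℝ} {C : ℝ} (hf : ∀ m, |f m| ≤ C) :
    Summable fun m => f m / (q:ℝ) ^ (m + 1) := by
  have h1 : (1:ℝ) < q := one_lt_qr hq
  have h0 : (0:ℝ) < q := by linarith
  apply Summable.of_norm_bounded (g := fun m => C * ((q:ℝ)⁻¹) ^ (m+1))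
  · apply Summable.mul_left
    exact (summable_nat_add_iff 1).2
      (summable_geometric_of_lt_one (by positivity) (inv_lt_one_of_one_lt₀ h1))
  · intro m
    rw [Real.norm_eq_abs, abs_div, abs_of_pos (by positivity : (0:ℝ) < (q:ℝ)^(m+1)),
      div_eq_mul_inv, ← inv_pow]
    exact mul_le_mul_of_nonneg_right (hf m) (by positivity)

lemma summable_digits (hq : 4 ≤ q) {d : ℕ → ℕ} (hd : ∀ m, d m ≤ q - 1) :
    Summable fun m => (d m : ℝ) / (q:ℝ)^(m+1) :=
  summable_div_pow hq (C := (q:ℝ)) fun m => by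
    rw [Nat.abs_cast]
    exact_mod_cast le_trans (hd m) (by omega)

lemma gsum_lt (hq : 4 ≤ q) {d e : ℕ → ℕ} (hd : ∀ m, d m ≤ q - 1) (he : ∀ m, e m ≤ q - 1)
    {M : ℕ} (hag : ∀ m, m < M → d m = e m) (hM : d M < e M)
    {k : ℕ} (hk : M < k) (hek : 1 ≤ e k) :
    ∑' m, (d m : ℝ)/(q:ℝ)^(m+1) < ∑' m, (e m : ℝ)/(q:ℝ)^(m+1) := by
  have h1 : (1:ℝ) < q := one_lt_qr hq
  have h0 : (0:ℝ) < q := by linarith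
  have hsd := summable_digits hq hd
  have hse := summable_digits hq he
  set F : ℕ → ℝ := fun m => ((e m : ℝ) - d m)/(q:ℝ)^(m+1) with hF
  have hFeq : ∀ m, F m = (e m : ℝ)/(q:ℝ)^(m+1) - (d m : ℝ)/(q:ℝ)^(m+1) := by
    intro m; rw [hF]; ring
  have hsF : Summable F := (hse.sub hsd).congr fun m => (hFeq m).symm
  have hdiff : ∑' m, F m =
      ∑' m, (e m:ℝ)/(q:ℝ)^(m+1) - ∑' m, (d m:ℝ)/(q:ℝ)^(m+1) := by
    rw [← Summable.tsum_sub hse hsd]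
    exact tsum_congr hFeq
  suffices h : 0 < ∑' m, F m by linarith [hdiff]
  have hsplit := Summable.sum_add_tsum_nat_add (M+1) hsF
  have hhead : ∑ m ∈ Finset.range (M+1), F m = F M := by
    rw [Finset.sum_range_succ]
    have hz : ∑ m ∈ Finset.range M, F m = 0 := by
      apply Finset.sum_eq_zero
      intro m hm
      rw [hF]
      simp [hag m (Finset.mem_range.1 hm)]
    rw [hz, zero_add]
  have hFM : 1/(q:ℝ)^(M+1) ≤ F M := by
    rw [hF]
    apply div_le_div_of_nonneg_right ?_ (by positivity)
    have : (d M : ℝ) + 1 ≤ (e M : ℝ) := by exact_mod_cast hM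
    linarith
  have htail : -(1/(q:ℝ)^(M+1)) < ∑' j, F (j + (M+1)) := by
    have hsleft : Summable fun j : ℕ => (-((q:ℝ)-1)) / (q:ℝ)^(j + (M+1) + 1) := by
      have hbase : Summable fun m : ℕ => (-((q:ℝ)-1)) / (q:ℝ)^(m + 1) :=
        summable_div_pow hq (C := (q:ℝ)-1) fun m => by
          rw [abs_neg, abs_of_nonneg (by linarith)]
      exact (summable_nat_add_iff
        (f := fun m : ℕ => (-((q:ℝ)-1)) / (q:ℝ)^(m + 1)) (M+1)).2 hbase
    have hsright : Summable fun j => F (j + (M+1)) := (summable_nat_add_iff (M+1)).2 hsF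
    have hlt : ∑' j : ℕ, (-((q:ℝ)-1)) / (q:ℝ)^(j + (M+1) + 1) < ∑' j, F (j + (M+1)) := by
      apply Summable.tsum_lt_tsum (i := k - (M+1)) ?_ ?_ hsleft hsright
      · intro j
        rw [hF]
        apply div_le_div_of_nonneg_right ?_ (by positivity)
        have h2 : (0:ℝ) ≤ (e (j + (M+1)) : ℝ) := by positivity
        have h3 : (d (j + (M+1)) : ℝ) ≤ (q:ℝ) - 1 := cast_le_qsub1 hq (hd _)
        linarith
      · rw [hF]
        have hkk : k - (M+1) + (M+1) = k := by omega
        rw [hkk]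
        apply div_lt_div_of_pos_right ?_ (by positivity)
        have h2 : (1:ℝ) ≤ (e k : ℝ) := by exact_mod_cast hek
        have h3 : (d k : ℝ) ≤ (q:ℝ) - 1 := cast_le_qsub1 hq (hd _)
        linarith
    have hval : ∑' j : ℕ, (-((q:ℝ)-1)) / (q:ℝ)^(j + (M+1) + 1) = -(1/(q:ℝ)^(M+1)) := by
      have hc : ∀ j : ℕ, (-((q:ℝ)-1)) / (q:ℝ)^(j + (M+1) + 1)
          = (-((q:ℝ)-1)) / (q:ℝ)^(j + ((M+1) + 1)) := by
        intro j; rw [Nat.add_assoc]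
      rw [tsum_congr hc, tsum_div_pow hq, neg_div, div_self (by linarith : (q:ℝ)-1 ≠ 0),
        neg_div]
    rw [hval] at hlt
    exact hlt
  rw [hhead] at hsplit
  linarith

lemma gsum_bound (hq : 4 ≤ q) {d e : ℕ → ℕ} (hd : ∀ m, d m ≤ q-1) (he : ∀ m, e m ≤ q-1)
    {N : ℕ} (hag : ∀ m, m < N → d m = e m) :
    |∑' m, (d m:ℝ)/(q:ℝ)^(m+1) - ∑' m, (e m:ℝ)/(q:ℝ)^(m+1)| ≤ 1/(q:ℝ)^N := by
  have h1 : (1:ℝ) < q := one_lt_qr hq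
  have hsd := summable_digits hq hd
  have hse := summable_digits hq he
  set F : ℕ → ℝ := fun m => ((d m : ℝ) - e m)/(q:ℝ)^(m+1) with hF
  have hFeq : ∀ m, F m = (d m:ℝ)/(q:ℝ)^(m+1) - (e m:ℝ)/(q:ℝ)^(m+1) := by
    intro m; rw [hF]; ring
  have hsF : Summable F := (hsd.sub hse).congr fun m => (hFeq m).symm
  have hdiff : ∑' m, (d m:ℝ)/(q:ℝ)^(m+1) - ∑' m, (e m:ℝ)/(q:ℝ)^(m+1) = ∑' m, F m := by
    rw [← Summable.tsum_sub hsd hse]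
    exact (tsum_congr hFeq).symm
  rw [hdiff]
  have hsplit := Summable.sum_add_tsum_nat_add N hsF
  have hz : ∑ m ∈ Finset.range N, F m = 0 := by
    apply Finset.sum_eq_zero
    intro m hm
    rw [hF]
    simp [hag m (Finset.mem_range.1 hm)]
  have hrw : ∑' m, F m = ∑' j, F (j + N) := by rw [← hsplit, hz, zero_add]
  rw [hrw]
  have hsFt : Summable fun j => F (j + N) := (summable_nat_add_iff N).2 hsF
  have hsb : Summable fun j : ℕ => ((q:ℝ)-1)/(q:ℝ)^(j + N + 1) := by
    have hbase : Summable fun m : ℕ => ((q:ℝ)-1)/(q:ℝ)^(m + 1) :=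
      summable_div_pow hq (C := (q:ℝ)-1) fun m => by
        rw [abs_of_nonneg (by linarith)]
    exact (summable_nat_add_iff
      (f := fun m : ℕ => ((q:ℝ)-1)/(q:ℝ)^(m + 1)) N).2 hbase
  have hnorm : ∀ j : ℕ, |F (j + N)| ≤ ((q:ℝ)-1)/(q:ℝ)^(j + N + 1) := by
    intro j
    rw [hF]
    simp only []
    rw [abs_div, abs_of_pos (by positivity : (0:ℝ) < (q:ℝ)^(j+N+1))]
    apply div_le_div_of_nonneg_right ?_ (by positivity)
    have hd' : (d (j+N) : ℝ) ≤ (q:ℝ)-1 := cast_le_qsub1 hq (hd _)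
    have he' : (e (j+N) : ℝ) ≤ (q:ℝ)-1 := cast_le_qsub1 hq (he _)
    have hd0 : (0:ℝ) ≤ (d (j+N) : ℝ) := by positivity
    have he0 : (0:ℝ) ≤ (e (j+N) : ℝ) := by positivity
    rw [abs_le]
    constructor <;> linarith
  have habs : Summable fun j => |F (j + N)| := hsFt.abs
  have h2 : |∑' j, F (j+N)| ≤ ∑' j, |F (j+N)| := by
    simpa [Real.norm_eq_abs] using
      norm_tsum_le_tsum_norm (f := fun j => F (j+N)) (by simpa [Real.norm_eq_abs] using habs)
  have h3 : ∑' j, |F (j+N)| ≤ ∑' j : ℕ, ((q:ℝ)-1)/(q:ℝ)^(j + N + 1) :=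
    Summable.tsum_le_tsum hnorm habs hsb
  have h4 : ∑' j : ℕ, ((q:ℝ)-1)/(q:ℝ)^(j + N + 1) = 1/(q:ℝ)^N := by
    have hc : ∀ j : ℕ, ((q:ℝ)-1)/(q:ℝ)^(j + N + 1) = ((q:ℝ)-1)/(q:ℝ)^(j + (N + 1)) := by
      intro j; rw [Nat.add_assoc]
    rw [tsum_congr hc, tsum_div_pow hq, div_self (by linarith : (q:ℝ)-1 ≠ 0)]
  linarith

lemma hmap_eq (hq : 4 ≤ q) (hu : u ≤ q - 1) (hα : ThetaSeq q u α) :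
    hmap q u α = ∑' m, (dig q u α m : ℝ)/(q:ℝ)^(m+1) := by
  have h1 : (1:ℝ) < q := one_lt_qr hq
  have h0 : (0:ℝ) < q := by linarith
  have S1 : Summable fun m : ℕ => (u:ℝ)/(q:ℝ)^(m+1) := by
    apply summable_div_pow hq (C := (q:ℝ))
    intro m
    rw [Nat.abs_cast]
    have : (u:ℝ) ≤ (q:ℝ) - 1 := cast_le_qsub1 hq hu
    linarith
  have S2 : Summable fun m => ((dig q u α m:ℝ) - u)/(q:ℝ)^(m+1) := by
    apply summable_div_pow hq (C := (q:ℝ))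
    intro m
    have hdig : (dig q u α m : ℝ) ≤ (q:ℝ)-1 := cast_le_qsub1 hq (dig_le hu hα m)
    have hu' : (u:ℝ) ≤ (q:ℝ)-1 := cast_le_qsub1 hq hu
    have hd0 : (0:ℝ) ≤ (dig q u α m : ℝ) := by positivity
    have hu0 : (0:ℝ) ≤ (u : ℝ) := by positivity
    rw [abs_le]
    constructor <;> linarith
  have E1 : ∑' m : ℕ, (u:ℝ)/(q:ℝ)^(m+1) = (u:ℝ)/((q:ℝ)-1) := by
    have hc : ∀ m : ℕ, (u:ℝ)/(q:ℝ)^(m+1) = (u:ℝ)/(q:ℝ)^(m + (0 + 1)) := by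
      intro m; norm_num
    rw [tsum_congr hc, tsum_div_pow hq]
    simp
  have E2 : ∑' m, ((dig q u α m:ℝ) - u)/(q:ℝ)^(m+1)
      = ∑' n, ((α n:ℝ) - u)/(q:ℝ)^(Ssum α n) := by
    have hinj : Function.Injective (fun n => Ssum α n - 1) := by
      intro a b hab
      have hab' : Ssum α a - 1 = Ssum α b - 1 := hab
      have ha := one_le_Ssum hα a
      have hb := one_le_Ssum hα b
      exact (Ssum_strictMono hα).injective (by omega)
    have hsupp : Function.support (fun m => ((dig q u α m:ℝ) - u)/(q:ℝ)^(m+1))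
        ⊆ Set.range (fun n => Ssum α n - 1) := by
      intro m hm
      by_contra hc
      apply hm
      have hnone : ∀ n, Ssum α n ≠ m + 1 := by
        intro n hn
        apply hc
        refine ⟨n, ?_⟩
        show Ssum α n - 1 = m
        omega
      simp [dig_of_not α m hnone]
    have key := hinj.tsum_eq (f := fun m => ((dig q u α m:ℝ) - u)/(q:ℝ)^(m+1)) hsupp
    rw [← key]
    apply tsum_congr
    intro n
    have hone := one_le_Ssum hα n
    show ((dig q u α (Ssum α n - 1) : ℝ) - u) / (q:ℝ)^((Ssum α n - 1)+1)
      = ((α n:ℝ) - u)/(q:ℝ)^(Ssum α n)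
    rw [dig_Ssum hα n, show (Ssum α n - 1) + 1 = Ssum α n by omega]
  rw [hmap, ← E1, ← E2, ← Summable.tsum_add S1 S2]
  apply tsum_congr
  intro m
  ring

lemma hmap_ne (hq : 4 ≤ q) (hu : u ≤ q - 1) (hα : ThetaSeq q u α) (hβ : ThetaSeq q u β)
    {M : ℕ} (hag : ∀ m, m < M → dig q u α m = dig q u β m)
    (hne : dig q u α M ≠ dig q u β M) : hmap q u α ≠ hmap q u β := by
  rw [hmap_eq hq hu hα, hmap_eq hq hu hβ]
  rcases lt_or_gt_of_ne hne with h | h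
  · obtain ⟨k, hk, hek⟩ := exists_dig_pos hβ M
    exact ne_of_lt (gsum_lt hq (dig_le hu hα) (dig_le hu hβ) hag h hk hek)
  · obtain ⟨k, hk, hek⟩ := exists_dig_pos hα M
    exact (ne_of_lt (gsum_lt hq (dig_le hu hβ) (dig_le hu hα)
      (fun m hm => (hag m hm).symm) h hk hek)).symm

lemma exists_theta_ne (hq : 4 ≤ q) (a : ℕ) :
    ∃ b, 1 ≤ b ∧ b ≤ q - 1 ∧ b ≠ u ∧ b ≠ a := by
  by_cases h1 : 1 ≠ u ∧ 1 ≠ a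
  · exact ⟨1, by omega, by omega, h1.1, h1.2⟩
  by_cases h2 : 2 ≠ u ∧ 2 ≠ a
  · exact ⟨2, by omega, by omega, h2.1, h2.2⟩
  · push_neg at h1 h2
    refine ⟨3, by omega, by omega, ?_, ?_⟩ <;>
    · by_cases hc : 1 = u
      · by_cases hc2 : 2 = u <;> omega
      · have := h1 hc
        by_cases hc2 : 2 = u <;> omega

lemma Dset_eq : Dset q u = hmap q u '' {α | ThetaSeq q u α} := by
  ext x
  constructor
  · rintro ⟨α, h1, h2⟩; exact ⟨α, h1, h2⟩
  · rintro ⟨α, h1, h2⟩; exact ⟨α, h1, h2⟩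

lemma isCompact_theta : IsCompact {α : ℕ → ℕ | ThetaSeq q u α} := by
  have heq : {α : ℕ → ℕ | ThetaSeq q u α}
      = Set.univ.pi (fun _ : ℕ => {a | 1 ≤ a ∧ a ≤ q - 1 ∧ a ≠ u}) := by
    ext α
    simp [ThetaSeq, Set.mem_pi]
  rw [heq]
  apply isCompact_univ_pi
  intro i
  apply Set.Finite.isCompact
  apply (Set.finite_Iic (q-1)).subset
  intro a ha
  exact ha.2.1

lemma continuousOn_hmap (hq : 4 ≤ q) (hu : u ≤ q - 1) :
    ContinuousOn (hmap q u) {α : ℕ → ℕ | ThetaSeq q u α} := by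
  have h1 : (1:ℝ) < q := one_lt_qr hq
  have h0 : (0:ℝ) < q := by linarith
  unfold hmap
  apply ContinuousOn.add continuousOn_const
  apply continuousOn_tsum (u := fun n : ℕ => (q:ℝ) * ((q:ℝ)⁻¹)^(n+1))
  · intro n
    apply Continuous.continuousOn
    have hc : Continuous fun α : ℕ → ℕ => (α n, Ssum α n) := by
      apply Continuous.prodMk (continuous_apply n)
      unfold Ssum
      exact continuous_finset_sum _ fun i _ => continuous_apply i
    exact (continuous_of_discreteTopology
      (f := fun p : ℕ × ℕ => ((p.1:ℝ) - u)/(q:ℝ)^p.2)).comp hc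
  · apply Summable.mul_left
    exact (summable_nat_add_iff 1).2
      (summable_geometric_of_lt_one (by positivity) (inv_lt_one_of_one_lt₀ h1))
  · intro n α hα
    have hSn : n + 1 ≤ Ssum α n := le_Ssum hα n
    have hpow : (q:ℝ)^(n+1) ≤ (q:ℝ)^(Ssum α n) := pow_le_pow_right₀ (le_of_lt h1) hSn
    have hnum : |(α n:ℝ) - u| ≤ (q:ℝ) := by
      have ha : (α n : ℝ) ≤ (q:ℝ)-1 := cast_le_qsub1 hq (hα n).2.1
      have ha0 : (0:ℝ) ≤ (α n : ℝ) := by positivity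
      have hu0 : (0:ℝ) ≤ (u : ℝ) := by positivity
      have hub : (u : ℝ) ≤ (q:ℝ) := by
        have := cast_le_qsub1 hq hu
        linarith
      rw [abs_le]
      constructor <;> linarith
    rw [Real.norm_eq_abs, abs_div, abs_of_pos (by positivity : (0:ℝ) < (q:ℝ)^(Ssum α n))]
    calc |(α n:ℝ) - u| / (q:ℝ)^(Ssum α n) ≤ (q:ℝ) / (q:ℝ)^(n+1) :=
          div_le_div₀ (by linarith) hnum (by positivity) hpow
      _ = (q:ℝ) * ((q:ℝ)⁻¹)^(n+1) := by rw [div_eq_mul_inv, inv_pow]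

lemma not_countable_cantor : ¬ Countable (ℕ → Bool) := by
  intro h
  have : Countable (Set ℕ) :=
    Countable.of_equiv (ℕ → Bool) (Equiv.arrowCongr (Equiv.refl ℕ) Equiv.propEquivBool).symm
  obtain ⟨f, hf⟩ := exists_injective_nat (Set ℕ)
  exact Function.cantor_injective f hf

end Stmt11Aux

open Stmt11Aux in
/-- `D` is a nonempty compact perfect subset of `ℝ`; in particular `D`
is uncountable. -/
theorem stmt11 (q : ℕ) (hq : 4 ≤ q) (u : ℕ) (hu : u ≤ q - 1) :
    (Dset q u).Nonempty ∧ IsCompact (Dset q u) ∧ Perfect (Dset q u) ∧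
      ¬ (Dset q u).Countable := by
  have h1 : (1:ℝ) < (q:ℝ) := one_lt_qr hq
  obtain ⟨v, hv1, hv2, hv3, _⟩ := exists_theta_ne (u := u) hq u
  have hvTheta : ThetaSeq q u (fun _ => v) := fun n => ⟨hv1, hv2, hv3⟩
  have hne : (Dset q u).Nonempty := ⟨hmap q u (fun _ => v), ⟨_, hvTheta, rfl⟩⟩
  have hcomp : IsCompact (Dset q u) := by
    rw [Dset_eq]
    exact isCompact_theta.image_of_continuousOn (continuousOn_hmap hq hu)
  have hperf : Perfect (Dset q u) := by
    constructor
    · exact hcomp.isClosed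
    · intro x hx
      obtain ⟨α, hα, hαx⟩ := hx
      rw [accPt_iff_nhds]
      intro U hU
      obtain ⟨ε, hε, hball⟩ := Metric.mem_nhds_iff.1 hU
      obtain ⟨N, hN⟩ := exists_pow_lt_of_lt_one hε
        (show (q:ℝ)⁻¹ < 1 from inv_lt_one_of_one_lt₀ h1)
      obtain ⟨b, hb1, hb2, hb3, hb4⟩ := exists_theta_ne (u := u) hq (α (N+1))
      set β := Function.update α (N+1) b with hβdef
      have hβN1 : β (N+1) = b := by rw [hβdef]; simp
      have hβother : ∀ i, i ≠ N+1 → β i = α i := by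
        intro i hi
        rw [hβdef]
        simp [Function.update_of_ne hi]
      have hβ : ThetaSeq q u β := by
        intro n
        by_cases hn : n = N+1
        · subst hn
          rw [hβN1]
          exact ⟨hb1, hb2, hb3⟩
        · rw [hβother n hn]
          exact hα n
      have hagree_low : ∀ i, i ≤ N → α i = β i := fun i hi =>
        (hβother i (by omega)).symm
      set T := Ssum α N with hTdef
      have hT : Ssum β N = T := by
        apply Finset.sum_congr rfl
        intro i hi
        rw [Finset.mem_range] at hi
        exact (hagree_low i (by omega)).symm
      set a := α (N+1) with hadef
      have hSa : Ssum α (N+1) = T + a := Ssum_succ α N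
      have hSb : Ssum β (N+1) = T + b := by rw [Ssum_succ, hT, hβN1]
      have h1T : 1 ≤ T := one_le_Ssum hα N
      have hNT : N + 1 ≤ T := le_Ssum hα N
      have ha1 : 1 ≤ a := (hα (N+1)).1
      have hanu : a ≠ u := (hα (N+1)).2.2
      set M := T + min a b - 1 with hMdef
      have haglow : ∀ m, m + 1 ≤ T → dig q u α m = dig q u β m := fun m hm =>
        dig_agree hα hβ hagree_low hm
      have hag : ∀ m, m < M → dig q u α m = dig q u β m := by
        intro m hm
        rcases le_or_gt (m+1) T with h | h
        · exact haglow m h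
        · have e1 : dig q u α m = u :=
            dig_between (N := N) hα (by omega) (by rw [hSa]; omega)
          have e2 : dig q u β m = u :=
            dig_between (N := N) hβ (by rw [hT]; omega) (by rw [hSb]; omega)
          rw [e1, e2]
      have hMne : dig q u α M ≠ dig q u β M := by
        rcases lt_or_gt_of_ne (Ne.symm hb4) with hab | hab
        · -- a < b, M = T + a - 1 = Ssum α (N+1) - 1
          have e1 : dig q u α M = a := by
            rw [show M = Ssum α (N+1) - 1 by rw [hSa]; omega]
            exact dig_Ssum hα (N+1)
          have e2 : dig q u β M = u :=
            dig_between (N := N) hβ (by rw [hT]; omega) (by rw [hSb]; omega)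
          rw [e1, e2]
          exact hanu
        · -- b < a, M = T + b - 1 = Ssum β (N+1) - 1
          have e1 : dig q u β M = b := by
            rw [show M = Ssum β (N+1) - 1 by rw [hSb]; omega, dig_Ssum hβ (N+1)]
            exact hβN1
          have e2 : dig q u α M = u :=
            dig_between (N := N) hα (by omega) (by rw [hSa]; omega)
          rw [e1, e2]
          exact fun hc => hb3 hc.symm
      have hmapne : hmap q u β ≠ hmap q u α :=
        (hmap_ne hq hu hα hβ hag hMne).symm
      have hagN : ∀ m, m < N → dig q u β m = dig q u α m := fun m hm =>
        (haglow m (by omega)).symm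
      have hbd := gsum_bound hq (dig_le hu hβ) (dig_le hu hα) hagN
      have hdist : |hmap q u β - hmap q u α| ≤ 1/(q:ℝ)^N := by
        rw [hmap_eq hq hu hβ, hmap_eq hq hu hα]
        exact hbd
      refine ⟨hmap q u β, ⟨?_, ⟨β, hβ, rfl⟩⟩, by rw [← hαx]; exact hmapne⟩
      apply hball
      rw [Metric.mem_ball, Real.dist_eq, ← hαx]
      calc |hmap q u β - hmap q u α| ≤ 1/(q:ℝ)^N := hdist
        _ = ((q:ℝ)⁻¹)^N := by rw [one_div, inv_pow]
        _ < ε := hN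
  have huc : ¬ (Dset q u).Countable := by
    intro hc
    obtain ⟨f, hrange, _, hinj⟩ := hperf.exists_nat_bool_injection hne
    have hcr : (Set.range f).Countable := hc.mono hrange
    have : Countable (Set.range f) := hcr.to_subtype
    have : Countable (ℕ → Bool) :=
      Countable.of_equiv (Set.range f) (Equiv.ofInjective f hinj).symm
    exact not_countable_cantor this
  exact ⟨hne, hcomp, hperf, huc⟩
end

section
/- If u ∈ {0,1}, then the function g is strictly decreasing on D: for all α, β ∈ Θ^{ℕ≥1} with h(α) < h(β) one has Φ(α) > Φ(β). If u ∈ {q−2, q−1}, then g is strictly increasing on D: for all α, β ∈ Θ^{ℕ≥1}, h(α) < h(β) implies Φ(α) < Φ(β). -/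
open Filter Topology MeasureTheory

namespace SAux

lemma summable_aux {q : ℕ} (hq : 2 ≤ q) (g : ℕ → ℝ) (c : ℝ) (hb : ∀ j, |g j| ≤ c) :
    Summable (fun j : ℕ => g j / (q:ℝ)^(j+1)) := by
  have hQ : (2:ℝ) ≤ (q:ℝ) := by exact_mod_cast hq
  have hQ0 : (0:ℝ) < q := by linarith
  apply Summable.of_norm_bounded (g := fun j => (c/q) * (1/q)^j)
  · exact Summable.mul_left _ (summable_geometric_of_lt_one (by positivity)
      (by rw [div_lt_one hQ0]; linarith))
  · intro j
    have h1 : (c/(q:ℝ)) * (1/q)^j = c / (q:ℝ)^(j+1) := by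
      rw [div_pow, one_pow, div_mul_div_comm, mul_one, ← pow_succ']
    rw [Real.norm_eq_abs, abs_div, abs_of_pos (pow_pos hQ0 _), h1]
    gcongr
    exact hb j

lemma tsum_div_pow {q : ℕ} (hq : 2 ≤ q) (c : ℝ) (m : ℕ) :
    ∑' i : ℕ, c / (q:ℝ)^(i+m) = c * (q:ℝ) / (((q:ℝ)-1) * (q:ℝ)^m) := by
  have hQ : (2:ℝ) ≤ (q:ℝ) := by exact_mod_cast hq
  have hQ0 : (0:ℝ) < q := by linarith
  have hq0 : (q:ℝ) ≠ 0 := by linarith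
  have h1 : ∀ i : ℕ, c / (q:ℝ)^(i+m) = (c/(q:ℝ)^m) * ((1:ℝ)/q)^i := by
    intro i
    rw [add_comm i m, div_pow, one_pow, div_mul_div_comm, mul_one, ← pow_add]
  simp_rw [h1]
  rw [tsum_mul_left, tsum_geometric_of_lt_one (by positivity)
    (by rw [div_lt_one hQ0]; linarith)]
  have h2 : (1 - 1/(q:ℝ))⁻¹ = (q:ℝ)/((q:ℝ)-1) := by
    rw [one_sub_div hq0, inv_div]
  rw [h2, div_mul_div_comm]
  rw [mul_comm ((q:ℝ)^m) ((q:ℝ)-1)]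

lemma summable_div_pow {q : ℕ} (hq : 2 ≤ q) (c : ℝ) (m : ℕ) :
    Summable (fun i : ℕ => c / (q:ℝ)^(i+m)) := by
  have hQ : (2:ℝ) ≤ (q:ℝ) := by exact_mod_cast hq
  have hQ0 : (0:ℝ) < q := by linarith
  have h1 : ∀ i : ℕ, c / (q:ℝ)^(i+m) = (c/(q:ℝ)^m) * ((1:ℝ)/q)^i := by
    intro i
    rw [add_comm i m, div_pow, one_pow, div_mul_div_comm, mul_one, ← pow_add]
  simp_rw [h1]
  exact Summable.mul_left _ (summable_geometric_of_lt_one (by positivity)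
    (by rw [div_lt_one hQ0]; linarith))

noncomputable def dser (q : ℕ) (d : ℕ → ℕ) : ℝ := ∑' j : ℕ, (d j : ℝ) / (q:ℝ)^(j+1)

lemma summable_dser {q : ℕ} (hq : 2 ≤ q) {d : ℕ → ℕ} (hd : ∀ j, d j ≤ q - 1) :
    Summable (fun j : ℕ => (d j : ℝ)/(q:ℝ)^(j+1)) := by
  apply summable_aux hq _ ((q:ℝ) - 1)
  intro j
  rw [abs_of_nonneg (Nat.cast_nonneg _)]
  have h1 : (d j : ℝ) ≤ ((q - 1 : ℕ) : ℝ) := by exact_mod_cast hd j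
  have h2 : ((q - 1 : ℕ) : ℝ) = (q:ℝ) - 1 := by
    have h : (1:ℕ) ≤ q := by omega
    push_cast [Nat.cast_sub h]
    ring
  linarith [h1, h2.le]

lemma dser_lt_dser {q : ℕ} (hq : 2 ≤ q) {d e : ℕ → ℕ}
    (hd : ∀ j, d j ≤ q - 1) (he : ∀ j, e j ≤ q - 1)
    {j0 j1 : ℕ} (hagree : ∀ j < j0, d j = e j) (h0 : d j0 < e j0)
    (hj01 : j0 < j1) (hwit : d j1 < q - 1 + e j1) :
    dser q d < dser q e := by
  have hQ : (2:ℝ) ≤ (q:ℝ) := by exact_mod_cast hq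
  have hQ0 : (0:ℝ) < q := by linarith
  have hcast : ((q - 1 : ℕ) : ℝ) = (q:ℝ) - 1 := by
    have h : (1:ℕ) ≤ q := by omega
    push_cast [Nat.cast_sub h]; ring
  set F : ℕ → ℝ := fun j => ((e j : ℝ) - d j)/(q:ℝ)^(j+1) with hF
  have hsd := summable_dser hq hd
  have hse := summable_dser hq he
  have hsF : Summable F := by
    have := hse.sub hsd
    simpa [hF, sub_div] using this
  have key : dser q e - dser q d = ∑' j, F j := by
    rw [dser, dser, ← Summable.tsum_sub hse hsd]
    exact tsum_congr fun j => (sub_div _ _ _).symm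
  have hsplit := Summable.sum_add_tsum_nat_add (j0+1) hsF
  have hfin : ∑ j ∈ Finset.range (j0+1), F j = F j0 := by
    rw [Finset.sum_range_succ]
    have hz : ∑ j ∈ Finset.range j0, F j = 0 := by
      apply Finset.sum_eq_zero
      intro j hj
      have := hagree j (Finset.mem_range.mp hj)
      simp [hF, this]
    rw [hz, zero_add]
  have hFj0 : 1/(q:ℝ)^(j0+1) ≤ F j0 := by
    have hn : (d j0:ℝ) + 1 ≤ e j0 := by exact_mod_cast h0
    have h1 : (1:ℝ) ≤ (e j0:ℝ) - d j0 := by linarith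
    have hp : (0:ℝ) < (q:ℝ)^(j0+1) := pow_pos hQ0 _
    exact (div_le_div_iff_of_pos_right hp).mpr h1
  set G : ℕ → ℝ := fun i => -(((q:ℝ)-1)/(q:ℝ)^(i+(j0+2))) with hG
  have hsG : Summable G := (summable_div_pow hq ((q:ℝ)-1) (j0+2)).neg
  have hGsum : ∑' i, G i = -(1/(q:ℝ)^(j0+1)) := by
    rw [hG, tsum_neg, tsum_div_pow hq]
    congr 1
    have hne : (q:ℝ) - 1 ≠ 0 := by linarith
    have hp1 : (q:ℝ)^(j0+2) = (q:ℝ)^(j0+1) * q := pow_succ _ _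
    have hp0 : (q:ℝ)^(j0+1) ≠ 0 := by positivity
    have hq0 : (q:ℝ) ≠ 0 := by linarith
    rw [hp1]
    field_simp
  have hpt : ∀ i, G i ≤ F (i+(j0+1)) := by
    intro i
    have harr : i+(j0+1)+1 = i+(j0+2) := by omega
    have h2 : F (i+(j0+1)) = ((e (i+(j0+1)):ℝ) - d (i+(j0+1)))/(q:ℝ)^(i+(j0+2)) := by
      simp only [hF, harr]
    have hdp : (d (i+(j0+1)) : ℝ) ≤ (q:ℝ) - 1 := by
      rw [← hcast]; exact_mod_cast hd (i+(j0+1))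
    have hep : (0:ℝ) ≤ (e (i+(j0+1)):ℝ) := Nat.cast_nonneg _
    rw [h2, hG]
    simp only
    rw [← neg_div]
    exact (div_le_div_iff_of_pos_right (pow_pos hQ0 _)).mpr (by linarith)
  have hstrict : G (j1 - (j0+1)) < F ((j1-(j0+1))+(j0+1)) := by
    have harr : (j1-(j0+1))+(j0+1) = j1 := by omega
    have harr2 : (j1-(j0+1))+(j0+2) = j1+1 := by omega
    rw [harr]
    have h2 : F j1 = ((e j1:ℝ) - d j1)/(q:ℝ)^(j1+1) := rfl
    rw [h2, hG]
    simp only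
    rw [harr2, ← neg_div]
    apply (div_lt_div_iff_of_pos_right (pow_pos hQ0 _)).mpr
    have hwit' : (d j1 :ℝ) < ((q-1+e j1 : ℕ):ℝ) := by exact_mod_cast hwit
    rw [Nat.cast_add, hcast] at hwit'
    linarith
  have hsF' : Summable (fun i => F (i+(j0+1))) := (summable_nat_add_iff (j0+1)).mpr hsF
  have htail : -(1/(q:ℝ)^(j0+1)) < ∑' i, F (i+(j0+1)) := by
    calc -(1/(q:ℝ)^(j0+1)) = ∑' i, G i := hGsum.symm
    _ < _ := Summable.tsum_lt_tsum hpt hstrict hsG hsF'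
  have hpos : 0 < ∑' j, F j := by
    rw [← hsplit, hfin]
    linarith
  linarith [key, hpos]


lemma Ssum_succ (α : ℕ → ℕ) (n : ℕ) : Ssum α (n+1) = Ssum α n + α (n+1) :=
  Finset.sum_range_succ α (n+1)

lemma Ssum_strictMono {α : ℕ → ℕ} (hα : ∀ n, 1 ≤ α n) : StrictMono (Ssum α) :=
  strictMono_nat_of_lt_succ fun n => by
    have := hα (n+1); rw [Ssum_succ]; omega

lemma lt_Ssum {α : ℕ → ℕ} (hα : ∀ n, 1 ≤ α n) (n : ℕ) : n < Ssum α n := by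
  induction n with
  | zero => have := hα 0; simp [Ssum]; omega
  | succ n ih => have := hα (n+1); rw [Ssum_succ]; omega

open scoped Classical in
noncomputable def dig (q u : ℕ) (α : ℕ → ℕ) (j : ℕ) : ℕ :=
  if h : ∃ n, Ssum α n = j + 1 then α h.choose else u

lemma dig_Ssum {q u : ℕ} {α : ℕ → ℕ} (hα : ∀ n, 1 ≤ α n) (n : ℕ) :
    dig q u α (Ssum α n - 1) = α n := by
  have h1 : n < Ssum α n := lt_Ssum hα n
  have hx : Ssum α n = (Ssum α n - 1) + 1 := by omega
  have hex : ∃ m, Ssum α m = (Ssum α n - 1) + 1 := ⟨n, hx⟩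
  rw [dig, dif_pos hex]
  have hsp := hex.choose_spec
  have : hex.choose = n := (Ssum_strictMono hα).injective (by omega)
  rw [this]

lemma dig_eq_u {q u : ℕ} {α : ℕ → ℕ} {j : ℕ} (h : ∀ n, Ssum α n ≠ j + 1) :
    dig q u α j = u := by
  rw [dig, dif_neg]
  rintro ⟨n, hn⟩; exact h n hn

lemma dig_le {q u : ℕ} (hu : u ≤ q - 1) {α : ℕ → ℕ} (hθ : ThetaSeq q u α) (j : ℕ) :
    dig q u α j ≤ q - 1 := by
  rw [dig]; split
  · exact (hθ _).2.1
  · exact hu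

-- `hmap` as a digit series --------------------------------------------------

lemma hmap_eq_dser {q u : ℕ} (hq : 2 ≤ q) (hu : u ≤ q - 1) {α : ℕ → ℕ}
    (hθ : ThetaSeq q u α) :
    hmap q u α = ∑' j : ℕ, (dig q u α j : ℝ) / (q:ℝ)^(j+1) := by
  have hα1 : ∀ n, 1 ≤ α n := fun n => (hθ n).1
  have hQ : (2:ℝ) ≤ (q:ℝ) := by exact_mod_cast hq
  have hQ0 : (0:ℝ) < q := by linarith
  have hcast : ((q - 1 : ℕ) : ℝ) = (q:ℝ) - 1 := by
    have h : (1:ℕ) ≤ q := by omega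
    push_cast [Nat.cast_sub h]; ring
  have hs1 : Summable (fun j : ℕ => (u:ℝ)/(q:ℝ)^(j+1)) := summable_div_pow hq u 1
  have hs2 : Summable (fun j : ℕ => ((dig q u α j : ℝ) - u)/(q:ℝ)^(j+1)) := by
    apply summable_aux hq _ ((q:ℝ))
    intro j
    have h1 : (dig q u α j : ℝ) ≤ (q:ℝ) - 1 := by
      rw [← hcast]; exact_mod_cast dig_le hu hθ j
    have h2 : (u:ℝ) ≤ (q:ℝ) - 1 := by rw [← hcast]; exact_mod_cast hu
    have h3 : (0:ℝ) ≤ (dig q u α j :ℝ) := Nat.cast_nonneg _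
    have h4 : (0:ℝ) ≤ (u:ℝ) := Nat.cast_nonneg _
    rw [abs_le]; constructor <;> linarith
  have h1 : ∑' j : ℕ, (dig q u α j : ℝ)/(q:ℝ)^(j+1)
      = ∑' j : ℕ, ((u:ℝ)/(q:ℝ)^(j+1) + ((dig q u α j : ℝ) - u)/(q:ℝ)^(j+1)) := by
    apply tsum_congr; intro j
    rw [← add_div]; ring_nf
  rw [h1, Summable.tsum_add hs1 hs2]
  unfold hmap
  congr 1
  · rw [tsum_div_pow hq (u:ℝ) 1, pow_one]
    have hne : (q:ℝ) - 1 ≠ 0 := by linarith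
    have hq0 : (q:ℝ) ≠ 0 := by linarith
    field_simp
  · set f : ℕ → ℝ := fun j => ((dig q u α j : ℝ) - u)/(q:ℝ)^(j+1) with hf
    have hinj : Function.Injective (fun n => Ssum α n - 1) := by
      intro a b hab
      have ha := lt_Ssum hα1 a
      have hb := lt_Ssum hα1 b
      simp only at hab
      exact (Ssum_strictMono hα1).injective (by omega)
    have hsupp : Function.support f ⊆ Set.range (fun n => Ssum α n - 1) := by
      intro j hj
      by_contra hc
      apply hj
      have hno : ∀ n, Ssum α n ≠ j + 1 := by
        intro n hn
        exact hc ⟨n, show Ssum α n - 1 = j by omega⟩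
      simp only [hf, dig_eq_u hno, sub_self, zero_div]
    have hte := hinj.tsum_eq hsupp
    rw [← hte]
    apply tsum_congr
    intro n
    have hlt : n < Ssum α n := lt_Ssum hα1 n
    have hone : Ssum α n - 1 + 1 = Ssum α n := by omega
    simp only [hf, dig_Ssum hα1 n, hone]

lemma dig_witness {q u : ℕ} (hq : 4 ≤ q) (hu : u ≤ q - 1) {α : ℕ → ℕ}
    (hθ : ThetaSeq q u α) (j0 : ℕ) :
    ∃ j1, j0 < j1 ∧ dig q u α j1 ≤ q - 2 := by
  have hα1 : ∀ n, 1 ≤ α n := fun n => (hθ n).1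
  by_cases hu' : u = q - 1
  · refine ⟨Ssum α (j0+1) - 1, ?_, ?_⟩
    · have := lt_Ssum hα1 (j0+1); omega
    · rw [dig_Ssum hα1]
      have h1 := (hθ (j0+1)).2.1
      have h2 := (hθ (j0+1)).2.2
      omega
  · by_cases hc : α (j0+2) ≤ q - 2
    · refine ⟨Ssum α (j0+2) - 1, ?_, ?_⟩
      · have := lt_Ssum hα1 (j0+2); omega
      · rw [dig_Ssum hα1]; exact hc
    · have hA : α (j0+2) = q - 1 := by have := (hθ (j0+2)).2.1; omega
      refine ⟨Ssum α (j0+1), ?_, ?_⟩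
      · have := lt_Ssum hα1 (j0+1); omega
      · have hnone : ∀ n, Ssum α n ≠ Ssum α (j0+1) + 1 := by
          intro n
          rcases le_or_gt n (j0+1) with h | h
          · have := (Ssum_strictMono hα1).monotone h
            have h1 := hα1 n
            omega
          · have h2 : j0 + 2 ≤ n := h
            have := (Ssum_strictMono hα1).monotone h2
            have hS : Ssum α (j0+2) = Ssum α (j0+1) + α (j0+2) := Ssum_succ α (j0+1)
            omega
        rw [dig_eq_u hnone]
        omega

lemma Ssum_congr {α β : ℕ → ℕ} {k n : ℕ} (hag : ∀ i < k, α i = β i) (hn : n < k) :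
    Ssum α n = Ssum β n :=
  Finset.sum_congr rfl fun i hi => hag i (by have := Finset.mem_range.mp hi; omega)

lemma Ssum_sub {α β : ℕ → ℕ} {k : ℕ} (hag : ∀ i < k, α i = β i) :
    Ssum α k + β k = Ssum β k + α k := by
  unfold Ssum
  rw [Finset.sum_range_succ, Finset.sum_range_succ,
    Finset.sum_congr rfl (fun i hi => hag i (Finset.mem_range.mp hi))]
  ring

lemma dig_agree_lt {q u : ℕ} {α β : ℕ → ℕ} (hα1 : ∀ n, 1 ≤ α n) (hβ1 : ∀ n, 1 ≤ β n)
    {k : ℕ} (hag : ∀ i < k, α i = β i) (hk : α k ≤ β k)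
    {j : ℕ} (hj : j + 1 < Ssum α k) : dig q u α j = dig q u β j := by
  have hkk : Ssum α k + β k = Ssum β k + α k := Ssum_sub hag
  by_cases hA : ∃ n, Ssum α n = j + 1
  · obtain ⟨n, hn⟩ := hA
    have hnk : n < k := by
      by_contra h
      have := (Ssum_strictMono hα1).monotone (not_lt.mp h)
      omega
    have hB : Ssum β n = j + 1 := by rw [← Ssum_congr hag hnk]; exact hn
    have d1 : dig q u α j = α n := by
      have := dig_Ssum (q := q) (u := u) hα1 n
      rwa [hn, Nat.add_sub_cancel] at this
    have d2 : dig q u β j = β n := by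
      have := dig_Ssum (q := q) (u := u) hβ1 n
      rwa [hB, Nat.add_sub_cancel] at this
    rw [d1, d2, hag n hnk]
  · have hB : ∀ n, Ssum β n ≠ j + 1 := by
      intro n hn
      rcases lt_or_ge n k with h | h
      · exact hA ⟨n, by rw [Ssum_congr hag h]; exact hn⟩
      · have := (Ssum_strictMono hβ1).monotone h
        omega
    rw [dig_eq_u (fun n hn => hA ⟨n, hn⟩), dig_eq_u hB]

lemma dig_at_k_alpha {q u : ℕ} {α : ℕ → ℕ} (hα1 : ∀ n, 1 ≤ α n) (k : ℕ) :
    dig q u α (Ssum α k - 1) = α k := dig_Ssum hα1 k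

lemma dig_at_k_beta {q u : ℕ} {α β : ℕ → ℕ} (hα1 : ∀ n, 1 ≤ α n) (hβ1 : ∀ n, 1 ≤ β n)
    {k : ℕ} (hag : ∀ i < k, α i = β i) (hk : α k < β k) :
    dig q u β (Ssum α k - 1) = u := by
  apply dig_eq_u
  intro n hn
  have h1 : 1 ≤ Ssum α k := by have := lt_Ssum hα1 k; omega
  have hkk := Ssum_sub hag
  rcases lt_or_ge n k with h | h
  · have h2 := Ssum_congr hag h
    have h3 := (Ssum_strictMono hα1) h
    omega
  · have := (Ssum_strictMono hβ1).monotone h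
    omega

-- lexicographic comparison of hmap -----------------------------------------

lemma hmap_lt_of_lt_u {q u : ℕ} (hq : 4 ≤ q) (hu : u ≤ q - 1) {α β : ℕ → ℕ}
    (hθα : ThetaSeq q u α) (hθβ : ThetaSeq q u β) {k : ℕ}
    (hag : ∀ i < k, α i = β i) (hk : α k < β k) (hku : α k < u) :
    hmap q u α < hmap q u β := by
  have hq2 : 2 ≤ q := by omega
  have hα1 : ∀ n, 1 ≤ α n := fun n => (hθα n).1
  have hβ1 : ∀ n, 1 ≤ β n := fun n => (hθβ n).1
  set j0 := Ssum α k - 1 with hj0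
  have h1 : 1 ≤ Ssum α k := by have := lt_Ssum hα1 k; omega
  obtain ⟨j1, hj1, hw⟩ := dig_witness hq hu hθα j0
  rw [hmap_eq_dser hq2 hu hθα, hmap_eq_dser hq2 hu hθβ]
  have := dser_lt_dser (d := dig q u α) (e := dig q u β) hq2
    (dig_le hu hθα) (dig_le hu hθβ)
    (j0 := j0) (j1 := j1)
    (fun j hj => dig_agree_lt hα1 hβ1 hag hk.le (by omega))
    (by rw [hj0, dig_at_k_alpha hα1 k, dig_at_k_beta hα1 hβ1 hag hk]; exact hku)
    hj1 (by omega)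
  exact this

lemma hmap_gt_of_gt_u {q u : ℕ} (hq : 4 ≤ q) (hu : u ≤ q - 1) {α β : ℕ → ℕ}
    (hθα : ThetaSeq q u α) (hθβ : ThetaSeq q u β) {k : ℕ}
    (hag : ∀ i < k, α i = β i) (hk : α k < β k) (hku : u < α k) :
    hmap q u β < hmap q u α := by
  have hq2 : 2 ≤ q := by omega
  have hα1 : ∀ n, 1 ≤ α n := fun n => (hθα n).1
  have hβ1 : ∀ n, 1 ≤ β n := fun n => (hθβ n).1
  set j0 := Ssum α k - 1 with hj0
  have h1 : 1 ≤ Ssum α k := by have := lt_Ssum hα1 k; omega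
  obtain ⟨j1, hj1, hw⟩ := dig_witness hq hu hθβ j0
  rw [hmap_eq_dser hq2 hu hθα, hmap_eq_dser hq2 hu hθβ]
  have := dser_lt_dser (d := dig q u β) (e := dig q u α) hq2
    (dig_le hu hθβ) (dig_le hu hθα)
    (j0 := j0) (j1 := j1)
    (fun j hj => (dig_agree_lt hα1 hβ1 hag hk.le (by omega)).symm)
    (by rw [hj0, dig_at_k_alpha hα1 k, dig_at_k_beta hα1 hβ1 hag hk]; exact hku)
    hj1 (by omega)
  exact this

lemma Phi_lt {q u : ℕ} (hq : 4 ≤ q) {α β : ℕ → ℕ}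
    (hθα : ThetaSeq q u α) (hθβ : ThetaSeq q u β) {k : ℕ}
    (hag : ∀ i < k, α i = β i) (hk : α k < β k) :
    Phi q α < Phi q β := by
  have hq2 : 2 ≤ q := by omega
  have h := dser_lt_dser (d := α) (e := β) hq2
    (fun j => (hθα j).2.1) (fun j => (hθβ j).2.1)
    (j0 := k) (j1 := k+1) hag hk (by omega)
    (by have := (hθβ (k+1)).1; have := (hθα (k+1)).2.1; omega)
  exact h

end SAux

/-- if `u ∈ {0,1}` then `g` is strictly decreasing on `D`; if
`u ∈ {q-2, q-1}` then `g` is strictly increasing on `D`. -/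
theorem stmt14 (q : ℕ) (hq : 4 ≤ q) (u : ℕ) (hu : u ≤ q - 1) :
    ((u = 0 ∨ u = 1) →
      ∀ α β, ThetaSeq q u α → ThetaSeq q u β →
        hmap q u α < hmap q u β → Phi q β < Phi q α) ∧
    ((u = q - 2 ∨ u = q - 1) →
      ∀ α β, ThetaSeq q u α → ThetaSeq q u β →
        hmap q u α < hmap q u β → Phi q α < Phi q β) := by
  open SAux in
  constructor
  · rintro hu01 α β hθα hθβ hlt
    have hne : ∃ n, α n ≠ β n := by
      by_contra h
      push_neg at h
      rw [funext h] at hlt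
      exact lt_irrefl _ hlt
    classical
    set k := Nat.find hne with hkdef
    have hk : α k ≠ β k := Nat.find_spec hne
    have hag : ∀ i < k, α i = β i := fun i hi => by
      by_contra h
      exact (Nat.find_min hne hi) h
    have hcase : β k < α k := by
      rcases lt_or_gt_of_ne hk with h | h
      · exfalso
        have hult : u < α k := by
          have h1 := (hθα k).1
          have h2 := (hθα k).2.2
          omega
        exact lt_asymm (hmap_gt_of_gt_u hq hu hθα hθβ hag h hult) hlt
      · exact h
    exact Phi_lt hq hθβ hθα (fun i hi => (hag i hi).symm) hcase
  · rintro hu01 α β hθα hθβ hlt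
    have hne : ∃ n, α n ≠ β n := by
      by_contra h
      push_neg at h
      rw [funext h] at hlt
      exact lt_irrefl _ hlt
    classical
    set k := Nat.find hne with hkdef
    have hk : α k ≠ β k := Nat.find_spec hne
    have hag : ∀ i < k, α i = β i := fun i hi => by
      by_contra h
      exact (Nat.find_min hne hi) h
    have hcase : α k < β k := by
      rcases lt_or_gt_of_ne hk with h | h
      · exact h
      · exfalso
        have hult : β k < u := by
          have h1 := (hθα k).2.1
          have h2 := (hθβ k).2.2
          omega
        exact lt_asymm (hmap_lt_of_lt_u hq hu hθβ hθα (fun i hi => (hag i hi).symm) h hult) hlt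
    exact Phi_lt hq hθα hθβ hag hcase
end

section
/- If q ≥ 5 and 2 ≤ u ≤ q−3, then g is not monotonic on D: there exist α, β, γ, δ ∈ Θ^{ℕ≥1} such that h(α) < h(β) with Φ(α) < Φ(β), and h(γ) < h(δ) with Φ(γ) > Φ(δ). -/
open Filter Topology MeasureTheory

lemma geom_aux (c Q : ℝ) (hQ : 1 < Q) : ∑' n : ℕ, c / Q ^ (n+1) = c / (Q - 1) := by
  have hQ0 : (0:ℝ) < Q := lt_trans one_pos hQ
  have hr : Q⁻¹ < 1 := inv_lt_one_of_one_lt₀ hQ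
  have hr0 : (0:ℝ) ≤ Q⁻¹ := by positivity
  have h1 : ∑' n : ℕ, (Q⁻¹)^n = (1 - Q⁻¹)⁻¹ := tsum_geometric_of_lt_one hr0 hr
  have h2 : ∀ n : ℕ, c / Q ^ (n+1) = (c/Q) * (Q⁻¹)^n := by
    intro n
    simp [pow_succ, div_eq_mul_inv, mul_inv, mul_comm, mul_assoc, mul_left_comm, inv_pow]
  rw [tsum_congr h2, tsum_mul_left, h1]
  have : Q - 1 ≠ 0 := by linarith
  field_simp

lemma hmap_const (q u a : ℕ) (hq : 2 ≤ q) (ha : 1 ≤ a) :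
    hmap q u (fun _ => a) = (u:ℝ)/((q:ℝ)-1) + ((a:ℝ)-(u:ℝ))/((q:ℝ)^a - 1) := by
  have hq1 : (1:ℝ) < (q:ℝ) := by exact_mod_cast hq
  have hQ : (1:ℝ) < (q:ℝ)^a := one_lt_pow₀ hq1 (by omega)
  unfold hmap
  congr 1
  have h2 : ∀ n : ℕ, ((a:ℝ)-(u:ℝ)) / (q:ℝ) ^ (Ssum (fun _ => a) n)
      = ((a:ℝ)-(u:ℝ)) / ((q:ℝ)^a) ^ (n+1) := by
    intro n
    have : Ssum (fun _ => a) n = a * (n+1) := by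
      simp [Ssum, Finset.sum_const, Finset.card_range, Nat.mul_comm]
    rw [this, pow_mul]
  rw [tsum_congr h2, geom_aux _ _ hQ]

lemma phi_const (q a : ℕ) (hq : 2 ≤ q) : Phi q (fun _ => a) = (a:ℝ)/((q:ℝ)-1) := by
  have hq1 : (1:ℝ) < (q:ℝ) := by exact_mod_cast hq
  unfold Phi
  exact geom_aux _ _ hq1

/-- if `q ≥ 5` and `2 ≤ u ≤ q-3`, then `g` is not monotonic on `D`. -/
theorem stmt15 (q : ℕ) (hq : 5 ≤ q) (u : ℕ) (hu2 : 2 ≤ u) (hu3 : u ≤ q - 3) :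
    ∃ α β γ δ : ℕ → ℕ,
      ThetaSeq q u α ∧ ThetaSeq q u β ∧ ThetaSeq q u γ ∧ ThetaSeq q u δ ∧
      hmap q u α < hmap q u β ∧ Phi q α < Phi q β ∧
      hmap q u γ < hmap q u δ ∧ Phi q δ < Phi q γ := by
  have hu3' : u + 3 ≤ q := by omega
  have hq2 : 2 ≤ q := by omega
  have hq1 : (1:ℝ) < (q:ℝ) := by exact_mod_cast hq2
  have hqr : (0:ℝ) < (q:ℝ) - 1 := by linarith
  have hur : (2:ℝ) ≤ (u:ℝ) := by exact_mod_cast hu2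
  refine ⟨(fun _ => 1), (fun _ => u+1), (fun _ => q-1), (fun _ => u+1), ?_, ?_, ?_, ?_, ?_, ?_, ?_, ?_⟩
  · intro n; dsimp only; omega
  · intro n; dsimp only; omega
  · intro n; dsimp only; omega
  · intro n; dsimp only; omega
  · rw [hmap_const q u 1 hq2 (by omega), hmap_const q u (u+1) hq2 (by omega)]
    have h1 : (0:ℝ) < (q:ℝ)^(u+1) - 1 := by
      have : (1:ℝ) < (q:ℝ)^(u+1) := one_lt_pow₀ hq1 (by omega)
      linarith
    push_cast
    have e1 : ((1:ℝ) - u)/((q:ℝ)^1 - 1) < 0 := by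
      apply div_neg_of_neg_of_pos (by linarith) (by simpa using hqr)
    have e2 : (0:ℝ) < ((u:ℝ)+1-u)/((q:ℝ)^(u+1) - 1) := by
      apply div_pos (by linarith) h1
    linarith
  · rw [phi_const q 1 hq2, phi_const q (u+1) hq2]
    push_cast
    rw [div_lt_div_iff₀ hqr hqr]
    nlinarith
  · rw [hmap_const q u (q-1) hq2 (by omega), hmap_const q u (u+1) hq2 (by omega)]
    have h1 : (0:ℝ) < (q:ℝ)^(u+1) - 1 := by
      have : (1:ℝ) < (q:ℝ)^(u+1) := one_lt_pow₀ hq1 (by omega)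
      linarith
    have h2 : (0:ℝ) < (q:ℝ)^(q-1) - 1 := by
      have : (1:ℝ) < (q:ℝ)^(q-1) := one_lt_pow₀ hq1 (by omega)
      linarith
    have hcast : ((q-1:ℕ):ℝ) = (q:ℝ) - 1 := by
      push_cast [Nat.cast_sub (by omega : 1 ≤ q)]; ring
    rw [hcast]
    apply (add_lt_add_iff_left _).mpr
    push_cast
    rw [div_lt_div_iff₀ h2 h1]
    -- key: ((q-1) - u)*(q^(u+1)-1) < ((u+1)-u)*(q^(q-1)-1)
    have key : ((q:ℝ) - 1 - u) * ((q:ℝ)^(u+1) - 1) < (q:ℝ)^(q-1) - 1 := by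
      have b1 : (q:ℝ) - 1 - u ≤ (q:ℝ) - 2 := by linarith
      have b1' : (0:ℝ) ≤ (q:ℝ) - 1 - u := by
        have : (u:ℝ) + 3 ≤ q := by exact_mod_cast hu3'
        linarith
      have b2 : (q:ℝ)^(u+1) - 1 ≤ (q:ℝ)^(q-2) - 1 := by
        have : (q:ℝ)^(u+1) ≤ (q:ℝ)^(q-2) :=
          pow_le_pow_right₀ (by linarith) (by omega)
        linarith
      have b2' : (0:ℝ) ≤ (q:ℝ)^(u+1) - 1 := le_of_lt h1
      have step : ((q:ℝ) - 1 - u) * ((q:ℝ)^(u+1) - 1) ≤ ((q:ℝ) - 2) * ((q:ℝ)^(q-2) - 1) :=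
        mul_le_mul b1 b2 b2' (by linarith)
      have hx : (1:ℝ) ≤ (q:ℝ)^(q-2) := le_of_lt (one_lt_pow₀ hq1 (by omega))
      have hsplit : (q:ℝ)^(q-1) = (q:ℝ)^(q-2) * q := by
        rw [← pow_succ]
        congr 1
        omega
      nlinarith [hx, hq1]
    linarith [key]
  · rw [phi_const q (u+1) hq2, phi_const q (q-1) hq2]
    have hcast : ((q-1:ℕ):ℝ) = (q:ℝ) - 1 := by
      push_cast [Nat.cast_sub (by omega : 1 ≤ q)]; ring
    rw [hcast]
    push_cast
    rw [div_lt_div_iff₀ hqr hqr]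
    have hcast2 : (u:ℝ) + 3 ≤ (q:ℝ) := by exact_mod_cast hu3'
    nlinarith
end

section
/- The function g : D → ℝ is continuous on D (continuous at every point of D with respect to the subspace topology of D ⊆ ℝ). -/
open Filter Topology MeasureTheory

namespace Stmt16Aux

open scoped Classical in
/-- The `k`-th digit of the base-`q` expansion of `hmap q u α`. -/
noncomputable def dig (u : ℕ) (α : ℕ → ℕ) (k : ℕ) : ℕ :=
  if h : ∃ n, Ssum α n = k then α (Nat.find h) else u

variable {q u : ℕ} {α β : ℕ → ℕ}

lemma Ssum_succ (α : ℕ → ℕ) (n : ℕ) : Ssum α (n + 1) = Ssum α n + α (n + 1) :=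
  Finset.sum_range_succ α (n + 1)

lemma Ssum_strictMono (hα : ThetaSeq q u α) : StrictMono (Ssum α) :=
  strictMono_nat_of_lt_succ fun n => by
    have := (hα (n + 1)).1
    rw [Ssum_succ]; omega

lemma Ssum_ge (hα : ThetaSeq q u α) (n : ℕ) : n + 1 ≤ Ssum α n := by
  induction n with
  | zero => simpa [Ssum] using (hα 0).1
  | succ n ih =>
    have := (hα (n + 1)).1
    rw [Ssum_succ]; omega

lemma dig_spec (hα : ThetaSeq q u α) {n k : ℕ} (h : Ssum α n = k) :
    dig u α k = α n := by
  classical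
  have hex : ∃ m, Ssum α m = k := ⟨n, h⟩
  rw [dig, dif_pos hex]
  congr 1
  exact (Ssum_strictMono hα).injective ((Nat.find_spec hex).trans h.symm)

lemma dig_not {k : ℕ} (h : ∀ n, Ssum α n ≠ k) : dig u α k = u := by
  classical
  rw [dig, dif_neg]
  push_neg
  exact h

lemma dig_le (hα : ThetaSeq q u α) (hu : u ≤ q - 1) (k : ℕ) : dig u α k ≤ q - 1 := by
  classical
  rw [dig]
  split
  · exact (hα _).2.1
  · exact hu

section Real

variable (q) in
noncomputable def r : ℝ := (q : ℝ)⁻¹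

lemma hq0 (hq : 4 ≤ q) : (0:ℝ) < q := by positivity

lemma hq1 (hq : 4 ≤ q) : (1:ℝ) < q := by
  exact_mod_cast Nat.lt_of_lt_of_le (by norm_num) hq

lemma hr0 (hq : 4 ≤ q) : 0 < r q := by
  have := hq0 hq; rw [r]; positivity

lemma hr1 (hq : 4 ≤ q) : r q < 1 := by
  rw [r]
  exact inv_lt_one_of_one_lt₀ (hq1 hq)

lemma summable_geom (hq : 4 ≤ q) : Summable (fun k : ℕ => (r q) ^ k) :=
  summable_geometric_of_lt_one (hr0 hq).le (hr1 hq)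

lemma summable_of_bound (hq : 4 ≤ q) {f : ℕ → ℝ} {c : ℝ}
    (h : ∀ k, ‖f k‖ ≤ c * (r q) ^ k) : Summable f :=
  Summable.of_norm_bounded ((summable_geom hq).mul_left c) h

lemma summable_digs (hq : 4 ≤ q) {d : ℕ → ℕ} (hd : ∀ k, d k ≤ q - 1) :
    Summable (fun k => (d k : ℝ) * (r q) ^ k) := by
  refine summable_of_bound hq (c := (q:ℝ)) fun k => ?_
  have h1 : (d k : ℝ) ≤ (q : ℝ) := by
    exact_mod_cast le_trans (hd k) (Nat.sub_le q 1)
  have h2 : (0:ℝ) ≤ (r q) ^ k := (pow_nonneg (hr0 hq).le k)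
  rw [Real.norm_eq_abs, abs_mul, abs_of_nonneg h2, abs_of_nonneg (by positivity)]
  exact mul_le_mul_of_nonneg_right h1 h2

lemma geom_tail (hq : 4 ≤ q) (p : ℕ) :
    ∑' k : ℕ, (if p < k then (r q) ^ k else 0) = (r q) ^ (p+1) * (1 - r q)⁻¹ := by
  have hs : Summable (fun k : ℕ => (if p < k then (r q) ^ k else 0)) := by
    refine summable_of_bound hq (c := 1) fun k => ?_
    rw [one_mul]
    split
    · rw [Real.norm_eq_abs, abs_of_nonneg (pow_nonneg (hr0 hq).le k)]
    · simp [pow_nonneg (hr0 hq).le k]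
  have := (Summable.sum_add_tsum_nat_add (f := fun k : ℕ => (if p < k then (r q) ^ k else 0))
    (p+1) hs).symm
  rw [this]
  have h1 : ∑ i ∈ Finset.range (p+1), (if p < i then (r q) ^ i else 0) = 0 := by
    apply Finset.sum_eq_zero
    intro i hi
    rw [Finset.mem_range] at hi
    rw [if_neg (by omega)]
  have h2 : ∀ i : ℕ, (if p < i + (p+1) then (r q) ^ (i + (p+1)) else 0)
      = (r q) ^ (p+1) * (r q) ^ i := by
    intro i
    rw [if_pos (by omega), pow_add, mul_comm]
  rw [h1, zero_add]
  calc ∑' i : ℕ, (if p < i + (p+1) then (r q) ^ (i + (p+1)) else 0)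
      = ∑' i : ℕ, (r q) ^ (p+1) * (r q) ^ i := by exact tsum_congr h2
    _ = (r q) ^ (p+1) * ∑' i : ℕ, (r q) ^ i := tsum_mul_left
    _ = (r q) ^ (p+1) * (1 - r q)⁻¹ := by
        rw [tsum_geometric_of_lt_one (hr0 hq).le (hr1 hq)]

lemma one_sub_r_inv (hq : 4 ≤ q) : (1 - r q)⁻¹ = (q:ℝ) / ((q:ℝ) - 1) := by
  have h0 := hq0 hq
  have h1 := hq1 hq
  rw [r]
  rw [show (1 : ℝ) - (q:ℝ)⁻¹ = ((q:ℝ) - 1) / q by field_simp]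
  rw [inv_div]

lemma cast_le_sub1 (hq : 4 ≤ q) {a : ℕ} (h : a ≤ q - 1) : (a : ℝ) ≤ (q : ℝ) - 1 := by
  have : (a : ℝ) ≤ ((q - 1 : ℕ) : ℝ) := by exact_mod_cast h
  rwa [Nat.cast_sub (by omega), Nat.cast_one] at this

lemma cast_le_sub2 (hq : 4 ≤ q) {a : ℕ} (h : a ≤ q - 2) : (a : ℝ) ≤ (q : ℝ) - 2 := by
  have : (a : ℝ) ≤ ((q - 2 : ℕ) : ℝ) := by exact_mod_cast h
  rwa [Nat.cast_sub (by omega), Nat.cast_ofNat] at this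

lemma hmap_eq_tsum_dig (hq : 4 ≤ q) (hu : u ≤ q - 1) (hα : ThetaSeq q u α) :
    hmap q u α = (∑' k : ℕ, (dig u α k : ℝ) * (r q) ^ k) - u := by
  have hdigle := dig_le hα hu
  have hsd : Summable (fun k => (dig u α k : ℝ) * (r q) ^ k) := summable_digs hq hdigle
  have hsu : Summable (fun k : ℕ => (u : ℝ) * (r q) ^ k) := (summable_geom hq).mul_left _
  set f : ℕ → ℝ := fun k => ((dig u α k : ℝ) - u) * (r q) ^ k with hf
  have hterm : ∀ n, ((α n : ℝ) - u) / (q : ℝ) ^ (Ssum α n) = f (Ssum α n) := by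
    intro n
    rw [hf]
    simp only
    rw [dig_spec hα rfl, div_eq_mul_inv, ← inv_pow, r]
  have hstep2 : ∑' n, f (Ssum α n) = ∑' k, f k := by
    refine Function.Injective.tsum_eq (Ssum_strictMono hα).injective ?_
    intro k hk
    by_contra hkr
    apply hk
    have hne : ∀ n, Ssum α n ≠ k := fun n h => hkr ⟨n, h⟩
    rw [hf]
    simp only
    rw [dig_not hne]
    ring
  have hstep3 : ∑' k, f k
      = (∑' k, (dig u α k : ℝ) * (r q) ^ k) - ∑' k : ℕ, (u : ℝ) * (r q) ^ k := by
    rw [← Summable.tsum_sub hsd hsu]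
    exact tsum_congr fun k => by rw [hf]; ring
  have hstep4 : ∑' k : ℕ, (u : ℝ) * (r q) ^ k = u * ((q : ℝ) / ((q : ℝ) - 1)) := by
    rw [tsum_mul_left, tsum_geometric_of_lt_one (hr0 hq).le (hr1 hq), one_sub_r_inv hq]
  have hq1' : (q : ℝ) - 1 ≠ 0 := by have := hq1 hq; linarith
  rw [hmap, tsum_congr hterm, hstep2, hstep3, hstep4]
  field_simp
  ring

lemma tsum_dig_lt (hq : 4 ≤ q) {a b : ℕ → ℕ} (ha : ∀ k, a k ≤ q - 1) (hb : ∀ k, b k ≤ q - 1)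
    {p : ℕ} (hlt : a p < b p) (hagree : ∀ k, k < p → a k = b k)
    {w : ℕ} (hw : p < w) (hwa : a w ≤ q - 2) :
    ∑' k, (a k : ℝ) * (r q) ^ k < ∑' k, (b k : ℝ) * (r q) ^ k := by
  have hr0' := hr0 hq
  have hsa := summable_digs hq ha
  have hsb := summable_digs hq hb
  set G : ℕ → ℝ := fun k =>
    (if k = p then (r q) ^ p else 0) + (if k = w then (r q) ^ w else 0)
      + (if p < k then -(((q : ℝ) - 1) * (r q) ^ k) else 0) with hG
  have hs1 : Summable (fun k : ℕ => if k = p then (r q) ^ p else 0) :=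
    (hasSum_ite_eq p ((r q) ^ p)).summable
  have hs2 : Summable (fun k : ℕ => if k = w then (r q) ^ w else 0) :=
    (hasSum_ite_eq w ((r q) ^ w)).summable
  have hs3' : Summable (fun k : ℕ => if p < k then (r q) ^ k else 0) := by
    refine summable_of_bound hq (c := 1) fun k => ?_
    rw [one_mul]
    split
    · rw [Real.norm_eq_abs, abs_of_nonneg (pow_nonneg hr0'.le k)]
    · simp [pow_nonneg hr0'.le k]
  have key3 : ∀ k : ℕ, (if p < k then -(((q : ℝ) - 1) * (r q) ^ k) else 0)
      = -(((q : ℝ) - 1) * (if p < k then (r q) ^ k else 0)) := by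
    intro k; split <;> simp
  have hs3 : Summable (fun k : ℕ => if p < k then -(((q : ℝ) - 1) * (r q) ^ k) else 0) := by
    rw [show (fun k : ℕ => if p < k then -(((q : ℝ) - 1) * (r q) ^ k) else 0)
        = fun k => -(((q : ℝ) - 1) * (if p < k then (r q) ^ k else 0)) from funext key3]
    exact ((hs3'.mul_left _).neg)
  have hsG : Summable G := (hs1.add hs2).add hs3
  have hqr : (q : ℝ) * r q = 1 := by
    rw [r]; exact mul_inv_cancel₀ (by positivity)
  have hGsum : ∑' k, G k = (r q) ^ w := by
    rw [hG, Summable.tsum_add (hs1.add hs2) hs3, Summable.tsum_add hs1 hs2, tsum_ite_eq, tsum_ite_eq]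
    have h3 : ∑' k : ℕ, (if p < k then -(((q : ℝ) - 1) * (r q) ^ k) else 0)
        = -(((q : ℝ) - 1) * ((r q) ^ (p + 1) * (1 - r q)⁻¹)) := by
      rw [tsum_congr key3, tsum_neg, tsum_mul_left, geom_tail hq]
    rw [h3, one_sub_r_inv hq]
    have hq1' : (q : ℝ) - 1 ≠ 0 := by have := hq1 hq; linarith
    have : ((q : ℝ) - 1) * ((r q) ^ (p + 1) * ((q : ℝ) / ((q : ℝ) - 1))) = (r q) ^ p := by
      field_simp
      rw [pow_succ]
      calc (q:ℝ) * ((r q) ^ p * r q) = (r q) ^ p * ((q:ℝ) * r q) := by ring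
        _ = (r q) ^ p := by rw [hqr, mul_one]
    rw [this]
    ring
  have hpt : ∀ k, G k ≤ (b k : ℝ) * (r q) ^ k - (a k : ℝ) * (r q) ^ k := by
    intro k
    have hrk : (0:ℝ) ≤ (r q) ^ k := pow_nonneg hr0'.le k
    rcases lt_trichotomy k p with h | h | h
    · have hGk : G k = 0 := by
        simp [hG, show k ≠ p by omega, show k ≠ w by omega, show ¬ p < k by omega]
      rw [hGk, hagree k h]
      simp
    · subst h
      have hGk : G k = (r q) ^ k := by
        simp [hG, show k ≠ w by omega]
      rw [hGk]
      have h1 : (1:ℝ) ≤ (b k : ℝ) - (a k : ℝ) := by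
        have : a k + 1 ≤ b k := hlt
        have := (Nat.cast_le (α := ℝ)).2 this
        push_cast at this
        linarith
      nlinarith
    · by_cases hkw : k = w
      · subst hkw
        have hGk : G k = (r q) ^ k + -(((q : ℝ) - 1) * (r q) ^ k) := by
          simp [hG, show k ≠ p by omega, h]
        rw [hGk]
        have h1 : (a k : ℝ) ≤ (q : ℝ) - 2 := cast_le_sub2 hq hwa
        have h2 : (0:ℝ) ≤ (b k : ℝ) := Nat.cast_nonneg _
        nlinarith
      · have hGk : G k = -(((q : ℝ) - 1) * (r q) ^ k) := by
          simp [hG, show k ≠ p by omega, hkw, h]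
        rw [hGk]
        have h1 : (a k : ℝ) ≤ (q : ℝ) - 1 := cast_le_sub1 hq (ha k)
        have h2 : (0:ℝ) ≤ (b k : ℝ) := Nat.cast_nonneg _
        nlinarith
  have hdiff : 0 < ∑' k, ((b k : ℝ) * (r q) ^ k - (a k : ℝ) * (r q) ^ k) := by
    calc (0:ℝ) < (r q) ^ w := pow_pos hr0' w
      _ = ∑' k, G k := hGsum.symm
      _ ≤ _ := Summable.tsum_le_tsum hpt hsG (hsb.sub hsa)
  rw [Summable.tsum_sub hsb hsa] at hdiff
  linarith

lemma exists_small_dig (hq : 4 ≤ q) (hu : u ≤ q - 1) (hα : ThetaSeq q u α) (p : ℕ) :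
    ∃ w, p < w ∧ dig u α w ≤ q - 2 := by
  by_cases huq : u = q - 1
  · refine ⟨Ssum α p, ?_, ?_⟩
    · have := Ssum_ge hα p; omega
    · rw [dig_spec hα rfl]
      have h1 := (hα p).2.1
      have h2 := (hα p).2.2
      omega
  · have hu2 : u ≤ q - 2 := by omega
    by_cases h1 : ∃ n, Ssum α n = p + 1
    · by_cases h2 : ∃ m, Ssum α m = p + 2
      · obtain ⟨n, hn⟩ := h1
        obtain ⟨m, hm⟩ := h2
        have hlt : n < m := by
          have := (Ssum_strictMono hα).lt_iff_lt (a := n) (b := m)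
          omega
        have h3 : Ssum α (n + 1) = Ssum α n + α (n + 1) := Ssum_succ α n
        have h4 : Ssum α (n + 1) ≤ Ssum α m := (Ssum_strictMono hα).monotone (by omega)
        have h5 : 1 ≤ α (n + 1) := (hα (n + 1)).1
        have h6 : Ssum α (n + 1) = p + 2 := by omega
        have hmn : m = n + 1 := (Ssum_strictMono hα).injective (by omega)
        have h7 : α (n + 1) = 1 := by omega
        refine ⟨p + 2, by omega, ?_⟩
        rw [dig_spec hα h6, h7]
        omega
      · refine ⟨p + 2, by omega, ?_⟩
        rw [dig_not (fun n h => h2 ⟨n, h⟩)]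
        exact hu2
    · refine ⟨p + 1, by omega, ?_⟩
      rw [dig_not (fun n h => h1 ⟨n, h⟩)]
      exact hu2

lemma hmap_ne (hq : 4 ≤ q) (hu : u ≤ q - 1) (hα : ThetaSeq q u α) (hβ : ThetaSeq q u β)
    {n₀ : ℕ} (hagree : ∀ m, m < n₀ → α m = β m) (hne : α n₀ < β n₀) :
    hmap q u α ≠ hmap q u β := by
  set p := Ssum α n₀ with hp
  have hSag : ∀ m, m < n₀ → Ssum α m = Ssum β m := fun m hm =>
    Finset.sum_congr rfl (fun i hi => hagree i (by rw [Finset.mem_range] at hi; omega))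
  have hβp : p < Ssum β n₀ := by
    have h1 : Ssum α n₀ = ∑ i ∈ Finset.range n₀, α i + α n₀ := Finset.sum_range_succ α n₀
    have h2 : Ssum β n₀ = ∑ i ∈ Finset.range n₀, β i + β n₀ := Finset.sum_range_succ β n₀
    have h3 : ∑ i ∈ Finset.range n₀, α i = ∑ i ∈ Finset.range n₀, β i :=
      Finset.sum_congr rfl fun i hi => hagree i (Finset.mem_range.mp hi)
    omega
  have hβnot : ∀ m, Ssum β m ≠ p := by
    intro m hm
    rcases Nat.lt_or_ge m n₀ with h | h
    · have h1 := hSag m h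
      have h2 : Ssum α m = Ssum α n₀ := by omega
      have := (Ssum_strictMono hα).injective h2
      omega
    · have : Ssum β n₀ ≤ Ssum β m := (Ssum_strictMono hβ).monotone h
      omega
  have hdig_ag : ∀ k, k < p → dig u α k = dig u β k := by
    intro k hk
    by_cases hex : ∃ n, Ssum α n = k
    · obtain ⟨n, hn⟩ := hex
      have hnlt : n < n₀ := by
        by_contra hc
        have : Ssum α n₀ ≤ Ssum α n := (Ssum_strictMono hα).monotone (by omega)
        omega
      have hb : Ssum β n = k := by rw [← hSag n hnlt]; exact hn
      rw [dig_spec hα hn, dig_spec hβ hb, hagree n hnlt]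
    · have hexb : ¬ ∃ m, Ssum β m = k := by
        rintro ⟨m, hm⟩
        have hmlt : m < n₀ := by
          by_contra hc
          have : Ssum β n₀ ≤ Ssum β m := (Ssum_strictMono hβ).monotone (by omega)
          omega
        exact hex ⟨m, by rw [hSag m hmlt]; exact hm⟩
      rw [dig_not (fun n h => hex ⟨n, h⟩), dig_not (fun m h => hexb ⟨m, h⟩)]
  have hdap : dig u α p = α n₀ := dig_spec hα hp.symm
  have hdbp : dig u β p = u := dig_not hβnot
  have hαu : α n₀ ≠ u := (hα n₀).2.2
  have hid_a := hmap_eq_tsum_dig hq hu hα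
  have hid_b := hmap_eq_tsum_dig hq hu hβ
  rcases Nat.lt_or_ge (α n₀) u with hcase | hcase
  · obtain ⟨w, hw1, hw2⟩ := exists_small_dig hq hu hα p
    have hkey := tsum_dig_lt hq (dig_le hα hu) (dig_le hβ hu)
      (p := p) (by rw [hdap, hdbp]; exact hcase) hdig_ag hw1 hw2
    intro hcontra
    rw [hid_a, hid_b] at hcontra
    linarith
  · have hcase' : u < α n₀ := by omega
    obtain ⟨w, hw1, hw2⟩ := exists_small_dig hq hu hβ p
    have hkey := tsum_dig_lt hq (dig_le hβ hu) (dig_le hα hu)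
      (p := p) (by rw [hdap, hdbp]; exact hcase') (fun k hk => (hdig_ag k hk).symm) hw1 hw2
    intro hcontra
    rw [hid_a, hid_b] at hcontra
    linarith

lemma hmap_inj (hq : 4 ≤ q) (hu : u ≤ q - 1) (hα : ThetaSeq q u α) (hβ : ThetaSeq q u β)
    (h : hmap q u α = hmap q u β) : α = β := by
  classical
  by_contra hne
  have hex : ∃ n, α n ≠ β n := by
    by_contra hc
    push_neg at hc
    exact hne (funext hc)
  have hn₀ : α (Nat.find hex) ≠ β (Nat.find hex) := Nat.find_spec hex
  have hag : ∀ m, m < Nat.find hex → α m = β m := fun m hm =>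
    not_not.mp (Nat.find_min hex hm)
  rcases Nat.lt_or_ge (α (Nat.find hex)) (β (Nat.find hex)) with hlt | hge
  · exact hmap_ne hq hu hα hβ hag hlt h
  · have hlt : β (Nat.find hex) < α (Nat.find hex) := by omega
    exact hmap_ne hq hu hβ hα (fun m hm => (hag m hm).symm) hlt h.symm

lemma cont_coord (q u : ℕ) (i : ℕ) :
    Continuous fun x : {α : ℕ → ℕ // ThetaSeq q u α} => x.1 i :=
  (continuous_apply i).comp continuous_subtype_val

lemma cont_hmapX (hq : 4 ≤ q) (hu : u ≤ q - 1) :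
    Continuous fun x : {α : ℕ → ℕ // ThetaSeq q u α} => hmap q u x.1 := by
  have hq1' := hq1 hq
  have hq0' := hq0 hq
  unfold hmap
  apply Continuous.add continuous_const
  refine continuous_tsum (f := fun n (x : {α : ℕ → ℕ // ThetaSeq q u α}) =>
      ((x.1 n : ℝ) - u) / (q : ℝ) ^ (Ssum x.1 n))
      (u := fun n => (q : ℝ) * (r q) ^ (n + 1)) ?_ ?_ ?_
  · intro n
    have hpow : Continuous fun x : {α : ℕ → ℕ // ThetaSeq q u α} => (q : ℝ) ^ (Ssum x.1 n) := by
      have hS : Continuous fun x : {α : ℕ → ℕ // ThetaSeq q u α} => Ssum x.1 n := by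
        unfold Ssum
        exact continuous_finset_sum _ fun i _ => cont_coord q u i
      exact (continuous_of_discreteTopology (f := fun m : ℕ => (q : ℝ) ^ m)).comp hS
    have hnum : Continuous fun x : {α : ℕ → ℕ // ThetaSeq q u α} => ((x.1 n : ℝ) - u) := by
      exact ((continuous_of_discreteTopology (f := fun m : ℕ => (m : ℝ))).comp
        (cont_coord q u n)).sub continuous_const
    exact hnum.div hpow fun x => by positivity
  · have : (fun n : ℕ => (q : ℝ) * (r q) ^ (n + 1)) = fun n => ((q : ℝ) * r q) * (r q) ^ n := by
      funext n; rw [pow_succ]; ring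
    rw [this]
    exact (summable_geom hq).mul_left _
  · intro n x
    have hx := x.2
    have h1 : |(x.1 n : ℝ) - u| ≤ (q : ℝ) := by
      have ha : (x.1 n : ℝ) ≤ (q : ℝ) - 1 := cast_le_sub1 hq (hx n).2.1
      have hb : (u : ℝ) ≤ (q : ℝ) - 1 := cast_le_sub1 hq hu
      have ha0 : (0:ℝ) ≤ (x.1 n : ℝ) := Nat.cast_nonneg _
      have hb0 : (0:ℝ) ≤ (u : ℝ) := Nat.cast_nonneg _
      rw [abs_le]
      constructor <;> linarith
    have h2 : (q : ℝ) ^ (n + 1) ≤ (q : ℝ) ^ (Ssum x.1 n) :=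
      pow_le_pow_right₀ (hq1 hq).le (Ssum_ge hx n)
    have h3 : (q:ℝ) * (r q) ^ (n+1) = (q : ℝ) / (q : ℝ) ^ (n + 1) := by
      rw [r, inv_pow, div_eq_mul_inv]
    have h4 : |(x.1 n : ℝ) - u| / (q:ℝ) ^ (Ssum x.1 n) ≤ (q:ℝ) * (r q) ^ (n+1) := by
      rw [h3]
      exact div_le_div₀ (by positivity) h1 (by positivity) h2
    rw [norm_div, Real.norm_eq_abs, Real.norm_eq_abs,
      abs_of_nonneg (by positivity : (0:ℝ) ≤ (q : ℝ) ^ (Ssum x.1 n))]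
    exact h4
  
lemma cont_PhiX (hq : 4 ≤ q) (hu : u ≤ q - 1) :
    Continuous fun x : {α : ℕ → ℕ // ThetaSeq q u α} => Phi q x.1 := by
  unfold Phi
  refine continuous_tsum (f := fun n (x : {α : ℕ → ℕ // ThetaSeq q u α}) =>
      (x.1 n : ℝ) / (q : ℝ) ^ (n + 1))
      (u := fun n => (q : ℝ) * (r q) ^ (n + 1)) ?_ ?_ ?_
  · intro n
    exact ((continuous_of_discreteTopology (f := fun m : ℕ => (m : ℝ))).comp
      (cont_coord q u n)).div continuous_const fun x => by
        have := hq0 hq; positivity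
  · have : (fun n : ℕ => (q : ℝ) * (r q) ^ (n + 1)) = fun n => ((q : ℝ) * r q) * (r q) ^ n := by
      funext n; rw [pow_succ]; ring
    rw [this]
    exact (summable_geom hq).mul_left _
  · intro n x
    have hq0' := hq0 hq
    have h1 : |(x.1 n : ℝ)| ≤ (q : ℝ) := by
      rw [abs_of_nonneg (Nat.cast_nonneg _)]
      have := cast_le_sub1 hq (x.2 n).2.1
      linarith
    have h3 : (q:ℝ) * (r q) ^ (n+1) = (q : ℝ) / (q : ℝ) ^ (n + 1) := by
      rw [r, inv_pow, div_eq_mul_inv]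
    have h4 : |(x.1 n : ℝ)| / (q:ℝ) ^ (n+1) ≤ (q:ℝ) * (r q) ^ (n+1) := by
      rw [h3]
      exact div_le_div₀ (by positivity) h1 (by positivity) (le_refl _)
    rw [norm_div, Real.norm_eq_abs, Real.norm_eq_abs,
      abs_of_nonneg (by positivity : (0:ℝ) ≤ (q : ℝ) ^ (n+1))]
    exact h4

lemma isCompactK (q u : ℕ) : IsCompact {α : ℕ → ℕ | ThetaSeq q u α} := by
  have he : {α : ℕ → ℕ | ThetaSeq q u α}
      = Set.pi Set.univ (fun _ : ℕ => {a : ℕ | 1 ≤ a ∧ a ≤ q - 1 ∧ a ≠ u}) := by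
    ext α
    simp [ThetaSeq, Set.mem_pi]
  rw [he]
  exact isCompact_univ_pi fun i => Set.Finite.isCompact
    (Set.Finite.subset (Set.finite_Iic (q - 1)) (fun a ha => Set.mem_Iic.mpr ha.2.1))

end Real

end Stmt16Aux

/-- the function `g : D → ℝ` (any function on `ℝ` satisfying
`g(h(α)) = Φ(α)` for all `α ∈ Θ^{ℕ≥1}`) is continuous on `D` with respect to the
subspace topology of `D ⊆ ℝ`. -/
theorem stmt16 (q : ℕ) (hq : 4 ≤ q) (u : ℕ) (hu : u ≤ q - 1)
    (g : ℝ → ℝ) (hg : ∀ α, ThetaSeq q u α → g (hmap q u α) = Phi q α) :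
    ContinuousOn g (Dset q u) := by
  classical
  open Stmt16Aux in
  haveI : CompactSpace {α : ℕ → ℕ | ThetaSeq q u α} :=
    isCompact_iff_compactSpace.mp (Stmt16Aux.isCompactK q u)
  let X := {α : ℕ → ℕ // ThetaSeq q u α}
  haveI : CompactSpace X := ‹CompactSpace {α : ℕ → ℕ | ThetaSeq q u α}›
  let h' : X → ℝ := fun x => hmap q u x.1
  have hch : Continuous h' := Stmt16Aux.cont_hmapX hq hu
  have hinj : Function.Injective h' := fun x y hxy =>
    Subtype.ext (Stmt16Aux.hmap_inj hq hu x.2 y.2 hxy)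
  have hemb := hch.isClosedEmbedding hinj
  have hrange : Set.range h' = Dset q u := by
    ext x
    constructor
    · rintro ⟨⟨α, hα⟩, rfl⟩
      exact ⟨α, hα, rfl⟩
    · rintro ⟨α, hα, rfl⟩
      exact ⟨⟨α, hα⟩, rfl⟩
  rw [← hrange, continuousOn_iff_continuous_restrict]
  let e := hemb.toIsEmbedding.toHomeomorph
  have hgr : (Set.range h').domRestrict g = (fun x : X => Phi q x.1) ∘ e.symm := by
    funext y
    have h1 : h' (e.symm y) = (y : ℝ) := by
      have h0 := e.apply_symm_apply y
      have h2 : (e (e.symm y) : ℝ) = h' (e.symm y) := rfl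
      rw [h0] at h2
      exact h2.symm
    have h3 : g (h' (e.symm y)) = Phi q (e.symm y).1 := hg _ (e.symm y).2
    simp only [Set.domRestrict, Function.comp]
    rw [← h1, h3]
  rw [hgr]
  exact (Stmt16Aux.cont_PhiX hq hu).comp e.symm.continuous
end

section
/- The function g is nowhere differentiable on its domain: for every x₀ ∈ D there is no real number L such that (g(x) − g(x₀))/(x − x₀) tends to L as x tends to x₀ within D \ {x₀}. -/
open Filter Topology MeasureTheory

/-- partial sum `α_0 + ⋯ + α_{N-1}` -/
def Psum (α : ℕ → ℕ) (N : ℕ) : ℕ := ∑ i ∈ Finset.range N, α i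

/-- the series part of `hmap` -/
noncomputable def g0 (q u : ℕ) (α : ℕ → ℕ) : ℝ :=
  ∑' n : ℕ, ((α n : ℝ) - (u : ℝ)) / (q : ℝ) ^ (Ssum α n)

lemma hmap_eq (q u : ℕ) (α : ℕ → ℕ) : hmap q u α = (u : ℝ) / ((q : ℝ) - 1) + g0 q u α := rfl

section Aux
variable {q u : ℕ}

lemma ssum_ge {α : ℕ → ℕ} (hα : ∀ n, 1 ≤ α n) (n : ℕ) : n + 1 ≤ Ssum α n := by
  have h := Finset.sum_le_sum (s := Finset.range (n+1)) (f := fun _ => 1) (g := α)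
    (fun i _ => hα i)
  simpa [Ssum] using h

lemma psum_ge {α : ℕ → ℕ} (hα : ∀ n, 1 ≤ α n) (N : ℕ) : N ≤ Psum α N := by
  have h := Finset.sum_le_sum (s := Finset.range N) (f := fun _ => 1) (g := α)
    (fun i _ => hα i)
  simpa [Psum] using h

lemma ssum_add (α : ℕ → ℕ) (N m : ℕ) :
    Ssum α (N + m) = Psum α N + Ssum (fun j => α (N + j)) m := by
  have : N + m + 1 = N + (m + 1) := by omega
  rw [Ssum, this, Finset.sum_range_add]; rfl

lemma abs_cast_sub_le (hq : 4 ≤ q) (hu : u ≤ q - 1) {a : ℕ} (ha : a ≤ q - 1) :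
    |(a : ℝ) - u| ≤ (q : ℝ) - 1 := by
  have h1 : ((q - 1 : ℕ) : ℝ) = (q : ℝ) - 1 := by
    push_cast [Nat.cast_sub (by omega : 1 ≤ q)]; ring
  have h2 : (a : ℝ) ≤ (q : ℝ) - 1 := by rw [← h1]; exact_mod_cast ha
  have h3 : (u : ℝ) ≤ (q : ℝ) - 1 := by rw [← h1]; exact_mod_cast hu
  have h4 : (0:ℝ) ≤ a := Nat.cast_nonneg a
  have h5 : (0:ℝ) ≤ u := Nat.cast_nonneg u
  rw [abs_le]; constructor <;> linarith

lemma term_norm_le (hq : 4 ≤ q) (hu : u ≤ q - 1) {α : ℕ → ℕ} (hα : ThetaSeq q u α) (n : ℕ) :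
    ‖((α n : ℝ) - u) / (q : ℝ) ^ (Ssum α n)‖ ≤ ((q:ℝ) - 1) * ((q:ℝ)⁻¹) ^ (n+1) := by
  have hQ1 : (1:ℝ) ≤ q := by norm_num; omega
  have hQ0 : (0:ℝ) < q := by linarith
  have h2 : ((q:ℝ)) ^ (n+1) ≤ (q:ℝ) ^ (Ssum α n) :=
    pow_le_pow_right₀ hQ1 (ssum_ge (fun k => (hα k).1) n)
  have hpos : (0:ℝ) < (q:ℝ) ^ (n+1) := pow_pos hQ0 _
  have h1 : |(α n : ℝ) - u| ≤ (q:ℝ) - 1 := abs_cast_sub_le hq hu (hα n).2.1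
  have := div_le_div₀ (by linarith : (0:ℝ) ≤ (q:ℝ) - 1) h1 hpos h2
  rw [Real.norm_eq_abs, abs_div, abs_of_pos (pow_pos hQ0 _)]
  calc |(α n : ℝ) - u| / (q : ℝ) ^ (Ssum α n) ≤ ((q:ℝ)-1) / (q:ℝ)^(n+1) := this
    _ = ((q:ℝ) - 1) * ((q:ℝ)⁻¹) ^ (n+1) := by rw [div_eq_mul_inv, inv_pow]

lemma summable_bound (hq : 4 ≤ q) :
    Summable (fun n : ℕ => ((q:ℝ) - 1) * ((q:ℝ)⁻¹) ^ (n+1)) := by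
  have hQ0 : (0:ℝ) < q := by norm_num; omega
  have h0 : (0:ℝ) ≤ (q:ℝ)⁻¹ := by positivity
  have h1 : (q:ℝ)⁻¹ < 1 := by
    rw [inv_lt_one_iff₀]; right; norm_num; omega
  have := ((summable_geometric_of_lt_one h0 h1).mul_left (((q:ℝ) - 1) * (q:ℝ)⁻¹))
  refine this.congr (fun n => ?_)
  rw [pow_succ']; ring

lemma summable_g0 (hq : 4 ≤ q) (hu : u ≤ q - 1) {α : ℕ → ℕ} (hα : ThetaSeq q u α) :
    Summable (fun n : ℕ => ((α n : ℝ) - u) / (q : ℝ) ^ (Ssum α n)) :=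
  Summable.of_norm_bounded (summable_bound hq) (term_norm_le hq hu hα)

lemma tsum_geo_succ {r : ℝ} (h0 : 0 ≤ r) (h1 : r < 1) :
    ∑' n : ℕ, r ^ (n+1) = r / (1 - r) := by
  have : (fun n : ℕ => r ^ (n+1)) = fun n => r * r ^ n := by
    funext n; rw [pow_succ']
  rw [this, tsum_mul_left, tsum_geometric_of_lt_one h0 h1, div_eq_mul_inv]

lemma abs_g0_le (hq : 4 ≤ q) (hu : u ≤ q - 1) {α : ℕ → ℕ} (hα : ThetaSeq q u α) :
    |g0 q u α| ≤ 1 := by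
  have hQ0 : (0:ℝ) < q := by norm_num; omega
  have hQ4 : (4:ℝ) ≤ q := by exact_mod_cast hq
  have h0 : (0:ℝ) ≤ (q:ℝ)⁻¹ := by positivity
  have h1 : (q:ℝ)⁻¹ < 1 := by rw [inv_lt_one_iff₀]; right; linarith
  have hs : Summable (fun n : ℕ => ‖((α n : ℝ) - u) / (q : ℝ) ^ (Ssum α n)‖) :=
    Summable.of_nonneg_of_le (fun n => norm_nonneg _) (term_norm_le hq hu hα) (summable_bound hq)
  have hb := Summable.tsum_le_tsum (term_norm_le hq hu hα) hs (summable_bound hq)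
  have hgeo : ∑' n : ℕ, ((q:ℝ) - 1) * ((q:ℝ)⁻¹) ^ (n+1) = 1 := by
    rw [tsum_mul_left, tsum_geo_succ h0 h1]
    have : (1 : ℝ) - (q:ℝ)⁻¹ = ((q:ℝ) - 1)/(q:ℝ) := by field_simp
    rw [this]
    have hq1 : (q:ℝ) - 1 ≠ 0 := by linarith
    have hq0 : (q:ℝ) ≠ 0 := by linarith
    field_simp
  calc |g0 q u α| ≤ ∑' n : ℕ, ‖((α n : ℝ) - u) / (q : ℝ) ^ (Ssum α n)‖ := by
        rw [g0]; exact norm_tsum_le_tsum_norm hs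
    _ ≤ ∑' n : ℕ, ((q:ℝ) - 1) * ((q:ℝ)⁻¹) ^ (n+1) := hb
    _ = 1 := hgeo

end Aux
section Split
variable {q u : ℕ}

lemma g0_split (hq : 4 ≤ q) (hu : u ≤ q - 1) {α : ℕ → ℕ} (hα : ThetaSeq q u α) (N : ℕ) :
    g0 q u α = (∑ n ∈ Finset.range N, ((α n : ℝ) - u) / (q:ℝ) ^ (Ssum α n))
      + ((q:ℝ) ^ (Psum α N))⁻¹ * g0 q u (fun m => α (N + m)) := by
  have hsum := summable_g0 hq hu hα
  have h := Summable.sum_add_tsum_nat_add (f := fun n => ((α n : ℝ) - u) / (q:ℝ) ^ (Ssum α n)) N hsum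
  rw [g0, ← h]
  congr 1
  rw [g0, ← tsum_mul_left]
  congr 1; funext m
  rw [show m + N = N + m by omega, ssum_add α N m, pow_add]
  ring

lemma summable_phi (hq : 4 ≤ q) {α : ℕ → ℕ} (hb : ∀ n, α n ≤ q - 1) :
    Summable (fun n : ℕ => (α n : ℝ) / (q:ℝ) ^ (n+1)) := by
  refine Summable.of_norm_bounded (summable_bound hq) (fun n => ?_)
  have hQ0 : (0:ℝ) < q := by norm_num; omega
  have h1' : ((q - 1 : ℕ) : ℝ) = (q : ℝ) - 1 := by
    push_cast [Nat.cast_sub (by omega : 1 ≤ q)]; ring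
  have h1 : (α n : ℝ) ≤ (q:ℝ) - 1 := by rw [← h1']; exact_mod_cast hb n
  have hpos : (0:ℝ) < (q:ℝ) ^ (n+1) := pow_pos hQ0 _
  rw [Real.norm_eq_abs, abs_div, abs_of_nonneg (Nat.cast_nonneg _), abs_of_pos hpos]
  calc (α n : ℝ) / (q:ℝ) ^ (n+1) ≤ ((q:ℝ) - 1) / (q:ℝ) ^ (n+1) :=
        div_le_div_of_nonneg_right h1 hpos.le |>.trans_eq rfl
    _ = ((q:ℝ) - 1) * ((q:ℝ)⁻¹) ^ (n+1) := by rw [div_eq_mul_inv, inv_pow]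

lemma Phi_split (hq : 4 ≤ q) {α : ℕ → ℕ} (hb : ∀ n, α n ≤ q - 1) (N : ℕ) :
    Phi q α = (∑ n ∈ Finset.range N, (α n : ℝ) / (q:ℝ) ^ (n+1))
      + ((q:ℝ) ^ N)⁻¹ * Phi q (fun m => α (N + m)) := by
  have hsum := summable_phi hq hb
  have h := Summable.sum_add_tsum_nat_add (f := fun n => (α n : ℝ) / (q:ℝ) ^ (n+1)) N hsum
  rw [Phi, ← h]
  congr 1
  rw [Phi, ← tsum_mul_left]
  congr 1; funext m
  rw [show m + N + 1 = N + (m + 1) by omega, pow_add]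
  ring

lemma hmap_sub (hq : 4 ≤ q) (hu : u ≤ q - 1) {α β : ℕ → ℕ}
    (hα : ThetaSeq q u α) (hβ : ThetaSeq q u β) (N : ℕ)
    (hpre : ∀ i, i < N → α i = β i) :
    hmap q u α - hmap q u β
      = ((q:ℝ) ^ (Psum α N))⁻¹ *
          (g0 q u (fun m => α (N + m)) - g0 q u (fun m => β (N + m))) := by
  have hP : Psum α N = Psum β N :=
    Finset.sum_congr rfl (fun i hi => hpre i (Finset.mem_range.mp hi))
  have hS : ∀ n, n < N → Ssum α n = Ssum β n := by
    intro n hn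
    exact Finset.sum_congr rfl (fun i hi => hpre i (by
      have := Finset.mem_range.mp hi; omega))
  have hpref : (∑ n ∈ Finset.range N, ((α n : ℝ) - u) / (q:ℝ) ^ (Ssum α n))
      = ∑ n ∈ Finset.range N, ((β n : ℝ) - u) / (q:ℝ) ^ (Ssum β n) := by
    refine Finset.sum_congr rfl (fun n hn => ?_)
    have hn' := Finset.mem_range.mp hn
    rw [hpre n hn', hS n hn']
  rw [hmap_eq, hmap_eq, g0_split hq hu hα N, g0_split hq hu hβ N, hpref, hP]
  ring

lemma Phi_sub (hq : 4 ≤ q) {α β : ℕ → ℕ}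
    (hα : ∀ n, α n ≤ q - 1) (hβ : ∀ n, β n ≤ q - 1) (N : ℕ)
    (hpre : ∀ i, i < N → α i = β i) :
    Phi q α - Phi q β
      = ((q:ℝ) ^ N)⁻¹ * (Phi q (fun m => α (N + m)) - Phi q (fun m => β (N + m))) := by
  have hpref : (∑ n ∈ Finset.range N, (α n : ℝ) / (q:ℝ) ^ (n+1))
      = ∑ n ∈ Finset.range N, (β n : ℝ) / (q:ℝ) ^ (n+1) := by
    refine Finset.sum_congr rfl (fun n hn => ?_)
    rw [hpre n (Finset.mem_range.mp hn)]
  rw [Phi_split hq hα N, Phi_split hq hβ N, hpref]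
  ring

end Split

section Eval
variable {q u : ℕ}

lemma ssum_const (e n : ℕ) : Ssum (fun _ => e) n = e * (n + 1) := by
  simp [Ssum, Finset.sum_const, Finset.card_range, mul_comm]

lemma psum_const (e N : ℕ) : Psum (fun _ => e) N = e * N := by
  simp [Psum, Finset.sum_const, Finset.card_range, mul_comm]

lemma g0_const (hq : 4 ≤ q) (e : ℕ) (he : 1 ≤ e) :
    g0 q u (fun _ => e) = ((e:ℝ) - u) / ((q:ℝ) ^ e - 1) := by
  have hQ1 : (1:ℝ) < q := by norm_num; omega
  have hQe : (1:ℝ) < (q:ℝ) ^ e := one_lt_pow₀ hQ1 (by omega)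
  have hr0 : (0:ℝ) ≤ ((q:ℝ) ^ e)⁻¹ := by positivity
  have hr1 : ((q:ℝ) ^ e)⁻¹ < 1 := by rw [inv_lt_one_iff₀]; right; exact hQe
  have hterm : (fun n : ℕ => ((e:ℝ) - u) / (q:ℝ) ^ (Ssum (fun _ => e) n))
      = fun n : ℕ => ((e:ℝ) - u) * (((q:ℝ) ^ e)⁻¹) ^ (n+1) := by
    funext n
    rw [ssum_const, pow_mul, div_eq_mul_inv, inv_pow]
  rw [g0, hterm, tsum_mul_left, tsum_geo_succ hr0 hr1]
  have h0 : (q:ℝ) ^ e ≠ 0 := by positivity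
  have h1 : (q:ℝ) ^ e - 1 ≠ 0 := by linarith
  field_simp

lemma Phi_const (hq : 4 ≤ q) (e : ℕ) :
    Phi q (fun _ => e) = (e:ℝ) / ((q:ℝ) - 1) := by
  have hQ1 : (1:ℝ) < q := by norm_num; omega
  have hr0 : (0:ℝ) ≤ (q:ℝ)⁻¹ := by positivity
  have hr1 : (q:ℝ)⁻¹ < 1 := by rw [inv_lt_one_iff₀]; right; exact hQ1
  have hterm : (fun n : ℕ => ((e:ℕ) : ℝ) / (q:ℝ) ^ (n+1))
      = fun n : ℕ => (e:ℝ) * ((q:ℝ)⁻¹) ^ (n+1) := by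
    funext n; rw [div_eq_mul_inv, inv_pow]
  rw [Phi, hterm, tsum_mul_left, tsum_geo_succ hr0 hr1]
  have h0 : (q:ℝ) ≠ 0 := by linarith
  have h1 : (q:ℝ) - 1 ≠ 0 := by linarith
  field_simp

def consSeq (b c : ℕ) : ℕ → ℕ := fun n => if n = 0 then b else c

lemma consSeq_theta (hb : 1 ≤ b ∧ b ≤ q - 1 ∧ b ≠ u) (hc : 1 ≤ c ∧ c ≤ q - 1 ∧ c ≠ u) :
    ThetaSeq q u (consSeq b c) := by
  intro n; unfold consSeq; split <;> assumption

lemma const_theta (hc : 1 ≤ c ∧ c ≤ q - 1 ∧ c ≠ u) : ThetaSeq q u (fun _ => c) :=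
  fun _ => hc

lemma consSeq_shift (b c : ℕ) : (fun m => consSeq b c (1 + m)) = (fun _ => c) := by
  funext m; simp [consSeq]

lemma g0_cons (hq : 4 ≤ q) (hu : u ≤ q - 1)
    (hb : 1 ≤ b ∧ b ≤ q - 1 ∧ b ≠ u) (hc : 1 ≤ c ∧ c ≤ q - 1 ∧ c ≠ u) :
    g0 q u (consSeq b c)
      = ((b:ℝ) - u) / (q:ℝ) ^ b + ((q:ℝ) ^ b)⁻¹ * (((c:ℝ) - u) / ((q:ℝ) ^ c - 1)) := by
  have h := g0_split hq hu (consSeq_theta hb hc) 1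
  rw [consSeq_shift] at h
  have h1 : Ssum (consSeq b c) 0 = b := by simp [Ssum, consSeq]
  have h2 : Psum (consSeq b c) 1 = b := by simp [Psum, consSeq]
  rw [h, h2, g0_const hq c hc.1, Finset.sum_range_one, h1]
  simp [consSeq, div_eq_mul_inv]

lemma Phi_cons (hq : 4 ≤ q) (hb : b ≤ q - 1) (hc : c ≤ q - 1) :
    Phi q (consSeq b c) = (b:ℝ) / (q:ℝ) + ((q:ℝ))⁻¹ * ((c:ℝ) / ((q:ℝ) - 1)) := by
  have hball : ∀ n, consSeq b c n ≤ q - 1 := by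
    intro n; unfold consSeq; split <;> assumption
  have h := Phi_split hq hball 1
  rw [consSeq_shift] at h
  rw [h, Phi_const hq c, Finset.sum_range_one]
  simp [consSeq]

end Eval
section Algebra
variable {q u : ℕ}

lemma cross_ne (hq : 4 ≤ q) (hu : u ≤ q - 1) {c d : ℕ}
    (hc1 : 1 ≤ c) (hcd : c < d) (hd : d ≤ q - 1) (hcu : c ≠ u) (hdu : d ≠ u) :
    ((c:ℝ) - u) * ((q:ℝ) ^ d - 1) ≠ ((d:ℝ) - u) * ((q:ℝ) ^ c - 1) := by
  have hQ4 : (4:ℝ) ≤ (q:ℝ) := by exact_mod_cast hq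
  have hQ1 : (1:ℝ) < (q:ℝ) := by linarith
  have hQc : (q:ℝ) ≤ (q:ℝ) ^ c := le_self_pow₀ (by linarith) (by omega)
  have hQc1 : (1:ℝ) < (q:ℝ) ^ c := by linarith
  have hQd1 : (1:ℝ) < (q:ℝ) ^ d := by
    have : (q:ℝ) ≤ (q:ℝ) ^ d := le_self_pow₀ (by linarith) (by omega)
    linarith
  have hQdc : (q:ℝ) * (q:ℝ) ^ c ≤ (q:ℝ) ^ d := by
    have h1 : (q:ℝ) ^ (c + 1) ≤ (q:ℝ) ^ d := pow_le_pow_right₀ (by linarith) (by omega)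
    calc (q:ℝ) * (q:ℝ) ^ c = (q:ℝ) ^ (c+1) := by ring
      _ ≤ _ := h1
  have hcast : ((q - 1 : ℕ) : ℝ) = (q:ℝ) - 1 := by
    push_cast [Nat.cast_sub (by omega : 1 ≤ q)]; ring
  have hdQ : (d:ℝ) ≤ (q:ℝ) - 1 := by rw [← hcast]; exact_mod_cast hd
  have hu0 : (0:ℝ) ≤ (u:ℝ) := Nat.cast_nonneg u
  have huQ : (u:ℝ) ≤ (q:ℝ) - 1 := by rw [← hcast]; exact_mod_cast hu
  have hcdR : (c:ℝ) < d := by exact_mod_cast hcd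
  rcases Nat.lt_or_ge u c with h | h
  · -- u < c : LHS > RHS
    have h1 : (u:ℝ) + 1 ≤ (c:ℝ) := by exact_mod_cast h
    apply ne_of_gt
    nlinarith [mul_le_mul_of_nonneg_right hdQ (le_of_lt (by linarith : (0:ℝ) < (q:ℝ)^c - 1))]
  rcases Nat.lt_or_ge u d with h' | h'
  · -- c < u < d
    have hcu' : c < u := by omega
    have h1 : (c:ℝ) < (u:ℝ) := by exact_mod_cast hcu'
    have h2 : (u:ℝ) < (d:ℝ) := by exact_mod_cast h'
    apply ne_of_lt
    nlinarith
  · -- d < u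
    have hdu' : d < u := by omega
    have h1 : (d:ℝ) + 1 ≤ (u:ℝ) := by exact_mod_cast hdu'
    apply ne_of_lt
    nlinarith
end Algebra
section FieldIds

lemma La (X A G : ℝ) (hX : X ≠ 0) (hX1 : X - 1 ≠ 0) :
    A / X + X⁻¹ * G - A / (X - 1) = X⁻¹ * (G - A / (X - 1)) := by
  field_simp; ring

lemma Lb (X A G : ℝ) (hX : X ≠ 0) (hX1 : X - 1 ≠ 0) :
    A / X + X⁻¹ * G - G = ((X - 1) / X) * (A / (X - 1) - G) := by
  field_simp; ring

end FieldIds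

section Algebra2
variable {q u : ℕ}

lemma div_ne (hq : 4 ≤ q) (hu : u ≤ q - 1) {c d : ℕ}
    (hc1 : 1 ≤ c) (hcd : c < d) (hd : d ≤ q - 1) (hcu : c ≠ u) (hdu : d ≠ u) :
    ((c:ℝ) - u) / ((q:ℝ) ^ c - 1) ≠ ((d:ℝ) - u) / ((q:ℝ) ^ d - 1) := by
  have hQ1 : (1:ℝ) < (q:ℝ) := by norm_num; omega
  have hc0 : (1:ℝ) < (q:ℝ) ^ c := one_lt_pow₀ hQ1 (by omega)
  have hd0 : (1:ℝ) < (q:ℝ) ^ d := one_lt_pow₀ hQ1 (by omega)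
  intro h
  rw [div_eq_div_iff (by linarith) (by linarith)] at h
  exact cross_ne hq hu hc1 hcd hd hcu hdu h
end Algebra2

section Pert
variable {q u : ℕ}

/-- sequence equal to `α` before `N` and to `τ (· - N)` from `N` on -/
def per (α τ : ℕ → ℕ) (N : ℕ) : ℕ → ℕ := fun n => if n < N then α n else τ (n - N)

lemma per_theta {α τ : ℕ → ℕ} (hα : ThetaSeq q u α) (hτ : ThetaSeq q u τ) (N : ℕ) :
    ThetaSeq q u (per α τ N) := by
  intro n; unfold per; split
  · exact hα n
  · exact hτ (n - N)

lemma per_shift (α τ : ℕ → ℕ) (N : ℕ) : (fun m => per α τ N (N + m)) = τ := by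
  funext m; simp [per]

lemma per_pre (α τ : ℕ → ℕ) (N : ℕ) : ∀ i, i < N → per α τ N i = α i := by
  intro i hi; simp [per, hi]

lemma psum_per (α τ : ℕ → ℕ) (N : ℕ) : Psum (per α τ N) N = Psum α N :=
  Finset.sum_congr rfl (fun i hi => per_pre α τ N i (Finset.mem_range.mp hi))

lemma shift_theta {α : ℕ → ℕ} (hα : ThetaSeq q u α) (N : ℕ) :
    ThetaSeq q u (fun m => α (N + m)) := fun m => hα (N + m)

lemma psum_succ (α : ℕ → ℕ) (n : ℕ) : Psum α (n + 1) = Psum α n + α n := by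
  simp [Psum, Finset.sum_range_succ]

lemma psum_mono_add {α : ℕ → ℕ} (hα1 : ∀ n, 1 ≤ α n) (a k : ℕ) :
    Psum α a + k ≤ Psum α (a + k) := by
  induction k with
  | zero => simp
  | succ k ih =>
    have := hα1 (a + k)
    rw [show a + (k+1) = (a + k) + 1 by omega, psum_succ]
    omega

lemma per_hmap_sub (hq : 4 ≤ q) (hu : u ≤ q - 1) {α τ : ℕ → ℕ}
    (hα : ThetaSeq q u α) (hτ : ThetaSeq q u τ) (N : ℕ) :
    hmap q u (per α τ N) - hmap q u α
      = ((q:ℝ) ^ (Psum α N))⁻¹ * (g0 q u τ - g0 q u (fun m => α (N + m))) := by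
  have h := hmap_sub hq hu (per_theta hα hτ N) hα N (per_pre α τ N)
  rw [psum_per, per_shift] at h
  exact h

lemma per_Phi_sub (hq : 4 ≤ q) {α τ : ℕ → ℕ}
    (hα : ∀ n, α n ≤ q - 1) (hτ : ∀ n, τ n ≤ q - 1) (N : ℕ) :
    Phi q (per α τ N) - Phi q α
      = ((q:ℝ) ^ N)⁻¹ * (Phi q τ - Phi q (fun m => α (N + m))) := by
  have hper : ∀ n, per α τ N n ≤ q - 1 := by
    intro n; unfold per; split
    · exact hα n
    · exact hτ _
  have h := Phi_sub hq hper hα N (per_pre α τ N)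
  rw [per_shift] at h
  exact h

lemma per_closeP (hq : 4 ≤ q) (hu : u ≤ q - 1) {α τ : ℕ → ℕ}
    (hα : ThetaSeq q u α) (hτ : ThetaSeq q u τ) (N : ℕ) :
    |hmap q u (per α τ N) - hmap q u α| ≤ 2 * ((q:ℝ) ^ (Psum α N))⁻¹ := by
  have hQ0 : (0:ℝ) < (q:ℝ) := by norm_num; omega
  have h := per_hmap_sub hq hu hα hτ N
  rw [h, abs_mul, abs_inv, abs_of_pos (pow_pos hQ0 _)]
  have h1 : |g0 q u τ - g0 q u (fun m => α (N + m))| ≤ 2 := by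
    have a1 := abs_g0_le hq hu hτ
    have a2 := abs_g0_le hq hu (shift_theta hα N)
    calc |g0 q u τ - g0 q u (fun m => α (N + m))|
        ≤ |g0 q u τ| + |g0 q u (fun m => α (N + m))| := abs_sub _ _
      _ ≤ 2 := by linarith
  have h3 : (0:ℝ) ≤ ((q:ℝ) ^ (Psum α N))⁻¹ := by positivity
  calc ((q:ℝ) ^ (Psum α N))⁻¹ * |g0 q u τ - g0 q u (fun m => α (N + m))|
      ≤ ((q:ℝ) ^ (Psum α N))⁻¹ * 2 := by
        exact mul_le_mul_of_nonneg_left h1 h3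
    _ = 2 * ((q:ℝ) ^ (Psum α N))⁻¹ := by ring

lemma per_close (hq : 4 ≤ q) (hu : u ≤ q - 1) {α τ : ℕ → ℕ}
    (hα : ThetaSeq q u α) (hτ : ThetaSeq q u τ) (N : ℕ) :
    |hmap q u (per α τ N) - hmap q u α| ≤ 2 * ((q:ℝ)⁻¹) ^ N := by
  have hQ0 : (0:ℝ) < (q:ℝ) := by norm_num; omega
  have hQ1 : (1:ℝ) ≤ (q:ℝ) := by norm_num; omega
  have h := per_hmap_sub hq hu hα hτ N
  rw [h, abs_mul, abs_inv, abs_of_pos (pow_pos hQ0 _)]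
  have h1 : |g0 q u τ - g0 q u (fun m => α (N + m))| ≤ 2 := by
    have a1 := abs_g0_le hq hu hτ
    have a2 := abs_g0_le hq hu (shift_theta hα N)
    calc |g0 q u τ - g0 q u (fun m => α (N + m))|
        ≤ |g0 q u τ| + |g0 q u (fun m => α (N + m))| := abs_sub _ _
      _ ≤ 2 := by linarith
  have h2 : ((q:ℝ) ^ (Psum α N))⁻¹ ≤ ((q:ℝ) ^ N)⁻¹ := by
    apply inv_anti₀ (pow_pos hQ0 _)
    exact pow_le_pow_right₀ hQ1 (psum_ge (fun n => (hα n).1) N)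
  have h3 : (0:ℝ) ≤ ((q:ℝ) ^ (Psum α N))⁻¹ := by positivity
  have h4 : (0:ℝ) < ((q:ℝ) ^ N)⁻¹ := by positivity
  calc ((q:ℝ) ^ (Psum α N))⁻¹ * |g0 q u τ - g0 q u (fun m => α (N + m))|
      ≤ ((q:ℝ) ^ N)⁻¹ * 2 := by
        apply mul_le_mul h2 h1 (abs_nonneg _) (le_of_lt h4)
    _ = 2 * ((q:ℝ)⁻¹) ^ N := by rw [inv_pow]; ring

end Pert
section Main
open Filter Topology

lemma tendsto_per {q u : ℕ} (hq : 4 ≤ q) (hu : u ≤ q - 1) {α τ : ℕ → ℕ}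
    (hα : ThetaSeq q u α) (hτ : ThetaSeq q u τ) {x₀ : ℝ} (hαx : hmap q u α = x₀)
    (hne : ∀ᶠ N in atTop, hmap q u (per α τ N) ≠ x₀) :
    Tendsto (fun N => hmap q u (per α τ N)) atTop (𝓝[Dset q u \ {x₀}] x₀) := by
  have hQ1 : (1:ℝ) < (q:ℝ) := by norm_num; omega
  rw [tendsto_nhdsWithin_iff]
  constructor
  · have hb : ∀ N, ‖hmap q u (per α τ N) - x₀‖ ≤ 2 * ((q:ℝ)⁻¹) ^ N := by
      intro N; rw [Real.norm_eq_abs, ← hαx]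
      exact per_close hq hu hα hτ N
    have h0 : Tendsto (fun N : ℕ => 2 * ((q:ℝ)⁻¹) ^ N) atTop (𝓝 0) := by
      have h1 := (tendsto_pow_atTop_nhds_zero_of_lt_one
        (by positivity : (0:ℝ) ≤ (q:ℝ)⁻¹)
        (by rw [inv_lt_one_iff₀]; right; exact hQ1)).const_mul (2:ℝ)
      simpa using h1
    have h2 := (squeeze_zero_norm hb h0).add_const x₀
    simpa using h2
  · refine hne.mono (fun N hN => ?_)
    exact ⟨⟨per α τ N, per_theta hα hτ N, rfl⟩, hN⟩

lemma caseB (q : ℕ) (hq : 4 ≤ q) (u : ℕ) (hu : u ≤ q - 1)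
    (g : ℝ → ℝ) (hg : ∀ α, ThetaSeq q u α → g (hmap q u α) = Phi q α)
    (x₀ : ℝ) (α : ℕ → ℕ) (hα : ThetaSeq q u α) (hαx : hmap q u α = x₀) (L : ℝ)
    (hL : Tendsto (fun x => (g x - g x₀) / (x - x₀))
      (nhdsWithin x₀ (Dset q u \ {x₀})) (nhds L))
    (N₀ : ℕ) (hN₀ : ∀ n, N₀ ≤ n → α n = 1) : False := by
  have hQ4 : (4:ℝ) ≤ (q:ℝ) := by exact_mod_cast hq
  have hQ1 : (1:ℝ) < (q:ℝ) := by linarith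
  have hQ0 : (0:ℝ) < (q:ℝ) := by linarith
  have hQne : (q:ℝ) ≠ 0 := ne_of_gt hQ0
  have hQ1ne : (q:ℝ) - 1 ≠ 0 := by linarith
  have h1u : (1:ℕ) ≠ u := by
    have h := (hα N₀).2.2; rw [hN₀ N₀ le_rfl] at h; exact h
  obtain ⟨b, hb2, hbq, hbu⟩ : ∃ b : ℕ, 2 ≤ b ∧ b ≤ q - 1 ∧ b ≠ u := by
    rcases eq_or_ne u 2 with h | h
    · exact ⟨3, by omega, by omega, by omega⟩
    · exact ⟨2, by omega, by omega, Ne.symm h⟩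
  have hbΘ : 1 ≤ b ∧ b ≤ q - 1 ∧ b ≠ u := ⟨by omega, hbq, hbu⟩
  have h1Θ : 1 ≤ 1 ∧ 1 ≤ q - 1 ∧ 1 ≠ u := ⟨le_rfl, by omega, h1u⟩
  have hQb1 : (1:ℝ) < (q:ℝ) ^ b := one_lt_pow₀ hQ1 (by omega)
  have hQbne : (q:ℝ) ^ b ≠ 0 := by positivity
  have hQb1ne : (q:ℝ) ^ b - 1 ≠ 0 := by linarith
  have hbR : (2:ℝ) ≤ (b:ℝ) := by exact_mod_cast hb2
  have hb1ne : (b:ℝ) - 1 ≠ 0 := by linarith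
  -- the exponent offset m
  have hPge : N₀ ≤ Psum α N₀ := psum_ge (fun n => (hα n).1) N₀
  set m : ℕ := Psum α N₀ - N₀ with hm
  have hPsum : ∀ N, N₀ ≤ N → Psum α N = N + m := by
    intro N hN
    have h1 : ∀ k, Psum α (N₀ + k) = Psum α N₀ + k := by
      intro k; induction k with
      | zero => simp
      | succ k ih =>
        rw [show N₀ + (k+1) = (N₀ + k) + 1 by omega, psum_succ, ih,
          hN₀ (N₀ + k) (by omega)]
        omega
    have h2 := h1 (N - N₀)
    rw [show N₀ + (N - N₀) = N by omega] at h2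
    omega
  have hQmne : (q:ℝ) ^ m ≠ 0 := by positivity
  -- abbreviations
  set G1 : ℝ := (1 - (u:ℝ)) / ((q:ℝ) - 1) with hG1
  set Gb : ℝ := ((b:ℝ) - (u:ℝ)) / ((q:ℝ) ^ b - 1) with hGbdef
  have hΔ : Gb - G1 ≠ 0 := by
    refine sub_ne_zero.mpr ?_
    have h := div_ne (q := q) (u := u) hq hu (c := 1) (d := b)
      le_rfl (by omega) hbq h1u hbu
    rw [pow_one] at h
    push_cast at h
    exact (Ne.symm h)
  -- shift of α is const 1
  have hshift : ∀ N, N₀ ≤ N → (fun k => α (N + k)) = (fun _ => (1:ℕ)) := by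
    intro N hN; funext k; exact hN₀ (N + k) (by omega)
  have hg0shift : ∀ N, N₀ ≤ N → g0 q u (fun k => α (N + k)) = G1 := by
    intro N hN
    rw [hshift N hN, g0_const hq 1 le_rfl, pow_one, hG1]
    norm_num
  have hPhishift : ∀ N, N₀ ≤ N → Phi q (fun k => α (N + k)) = 1 / ((q:ℝ) - 1) := by
    intro N hN
    rw [hshift N hN, Phi_const hq 1]
    norm_num
  -- generic limit computation for an admissible tail τ
  have main : ∀ τ : ℕ → ℕ, ThetaSeq q u τ → g0 q u τ - G1 ≠ 0 →
      (q:ℝ) ^ m * (Phi q τ - 1/((q:ℝ)-1)) / (g0 q u τ - G1) = L := by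
    intro τ hτ hne
    have hxdiff : ∀ N, N₀ ≤ N →
        hmap q u (per α τ N) - x₀ = ((q:ℝ)^(N + m))⁻¹ * (g0 q u τ - G1) := by
      intro N hN
      rw [← hαx, per_hmap_sub hq hu hα hτ N, hg0shift N hN, hPsum N hN]
    have hgdiff : ∀ N, N₀ ≤ N →
        g (hmap q u (per α τ N)) - g x₀
          = ((q:ℝ)^N)⁻¹ * (Phi q τ - 1/((q:ℝ)-1)) := by
      intro N hN
      rw [hg _ (per_theta hα hτ N), ← hαx, hg _ hα,
        per_Phi_sub hq (fun n => (hα n).2.1) (fun n => (hτ n).2.1) N, hPhishift N hN]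
    have hne' : ∀ᶠ N in atTop, hmap q u (per α τ N) ≠ x₀ := by
      refine Filter.eventually_atTop.mpr ⟨N₀, fun N hN => ?_⟩
      intro h
      have h2 := hxdiff N hN
      rw [h, sub_self] at h2
      have : ((q:ℝ)^(N + m))⁻¹ * (g0 q u τ - G1) ≠ 0 :=
        mul_ne_zero (by positivity) hne
      exact this h2.symm
    have htend := tendsto_per hq hu hα hτ hαx hne'
    have hcomp := hL.comp htend
    have hquot : ∀ N, N₀ ≤ N →
        (g (hmap q u (per α τ N)) - g x₀) / (hmap q u (per α τ N) - x₀)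
          = (q:ℝ) ^ m * (Phi q τ - 1/((q:ℝ)-1)) / (g0 q u τ - G1) := by
      intro N hN
      rw [hgdiff N hN, hxdiff N hN, pow_add]
      have hQN : (q:ℝ)^N ≠ 0 := by positivity
      have hQm0 : (q:ℝ)^m ≠ 0 := hQmne
      field_simp
    have hconst : Tendsto
        (fun N => (g (hmap q u (per α τ N)) - g x₀) / (hmap q u (per α τ N) - x₀))
        atTop (𝓝 ((q:ℝ) ^ m * (Phi q τ - 1/((q:ℝ)-1)) / (g0 q u τ - G1))) := by
      refine Filter.Tendsto.congr' ?_ tendsto_const_nhds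
      exact Filter.eventually_atTop.mpr ⟨N₀, fun N hN => (hquot N hN).symm⟩
    exact tendsto_nhds_unique hconst hcomp
  -- apply to τ₁ = const b
  have hA1 : (q:ℝ) ^ m * (((b:ℝ) - 1)/((q:ℝ)-1)) / (Gb - G1) = L := by
    have h := main (fun _ => b) (const_theta hbΘ) (by
      rw [g0_const hq b (by omega)]; exact hΔ)
    rw [g0_const hq b (by omega), Phi_const hq b, div_sub_div_same] at h
    exact h
  -- apply to τ₂ = consSeq b 1
  have hg0τ2 : g0 q u (consSeq b 1) - G1 = (((q:ℝ)^b - 1)/(q:ℝ)^b) * (Gb - G1) := by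
    rw [g0_cons hq hu hbΘ h1Θ, pow_one, Nat.cast_one, ← hG1]
    have hLb := Lb ((q:ℝ)^b) ((b:ℝ) - (u:ℝ)) G1 hQbne hQb1ne
    rw [hLb, ← hGbdef]
  have hτ2ne : g0 q u (consSeq b 1) - G1 ≠ 0 := by
    rw [hg0τ2]
    exact mul_ne_zero (div_ne_zero hQb1ne hQbne) hΔ
  have hA2 : (q:ℝ) ^ m * (((b:ℝ) - 1)/(q:ℝ)) / ((((q:ℝ)^b - 1)/(q:ℝ)^b) * (Gb - G1)) = L := by
    have h := main (consSeq b 1) (consSeq_theta hbΘ h1Θ) hτ2ne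
    have e2 : (b:ℝ)/(q:ℝ) + ((q:ℝ))⁻¹ * ((((1:ℕ)):ℝ)/((q:ℝ)-1)) - 1/((q:ℝ)-1)
        = ((b:ℝ)-1)/(q:ℝ) := by
      rw [Nat.cast_one]
      field_simp
      ring
    rw [hg0τ2, Phi_cons hq hbq (by omega), e2] at h
    exact h
  -- contradiction
  have key : (q:ℝ) ^ m * (((b:ℝ) - 1)/((q:ℝ)-1)) / (Gb - G1)
      = (q:ℝ) ^ m * (((b:ℝ) - 1)/(q:ℝ)) / ((((q:ℝ)^b - 1)/(q:ℝ)^b) * (Gb - G1)) := by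
    rw [hA1, hA2]
  have hCΔ : (((q:ℝ)^b - 1)/(q:ℝ)^b) * (Gb - G1) ≠ 0 :=
    mul_ne_zero (div_ne_zero hQb1ne hQbne) hΔ
  rw [div_eq_div_iff hΔ hCΔ] at key
  have key2 : ((q:ℝ) ^ m * (((b:ℝ) - 1)/((q:ℝ)-1)) * (((q:ℝ)^b - 1)/(q:ℝ)^b)) * (Gb - G1)
      = ((q:ℝ) ^ m * (((b:ℝ) - 1)/(q:ℝ))) * (Gb - G1) := by
    rw [mul_assoc]; exact key
  have key3 := mul_right_cancel₀ hΔ key2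
  have hMne : (q:ℝ) ^ m * ((b:ℝ) - 1) ≠ 0 := mul_ne_zero hQmne hb1ne
  have r1 : (q:ℝ) ^ m * (((b:ℝ) - 1)/((q:ℝ)-1)) * (((q:ℝ)^b - 1)/(q:ℝ)^b)
      = ((q:ℝ) ^ m * ((b:ℝ) - 1)) * (((q:ℝ)^b - 1)/(((q:ℝ)-1) * (q:ℝ)^b)) := by
    field_simp
  have r2 : (q:ℝ) ^ m * (((b:ℝ) - 1)/(q:ℝ)) = ((q:ℝ) ^ m * ((b:ℝ) - 1)) * (1/(q:ℝ)) := by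
    ring
  rw [r1, r2] at key3
  have key4 := mul_left_cancel₀ hMne key3
  rw [div_eq_div_iff (mul_ne_zero hQ1ne hQbne) hQne] at key4
  have e3 : (q:ℝ) ^ b = (q:ℝ) := by linear_combination key4
  have hQ2b : (q:ℝ) ^ 2 ≤ (q:ℝ) ^ b := pow_le_pow_right₀ hQ1.le hb2
  nlinarith

end Main
set_option maxHeartbeats 1000000 in
lemma caseA (q : ℕ) (hq : 4 ≤ q) (u : ℕ) (hu : u ≤ q - 1)
    (g : ℝ → ℝ) (hg : ∀ α, ThetaSeq q u α → g (hmap q u α) = Phi q α)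
    (x₀ : ℝ) (α : ℕ → ℕ) (hα : ThetaSeq q u α) (hαx : hmap q u α = x₀) (L : ℝ)
    (hL : Tendsto (fun x => (g x - g x₀) / (x - x₀))
      (nhdsWithin x₀ (Dset q u \ {x₀})) (nhds L))
    (hev : ∀ N₀ : ℕ, ∃ n, N₀ ≤ n ∧ α n ≠ 1) : False := by
  have hQ4 : (4:ℝ) ≤ (q:ℝ) := by exact_mod_cast hq
  have hQ1 : (1:ℝ) < (q:ℝ) := by linarith
  have hQ0 : (0:ℝ) < (q:ℝ) := by linarith
  have hQne : (q:ℝ) ≠ 0 := ne_of_gt hQ0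
  have hQ1ne : (q:ℝ) - 1 ≠ 0 := by linarith
  -- choice of c < d in Θ
  obtain ⟨c, d, hc1, hcd, hdq, hcu, hdu⟩ :
      ∃ c d : ℕ, 1 ≤ c ∧ c < d ∧ d ≤ q - 1 ∧ c ≠ u ∧ d ≠ u := by
    rcases eq_or_ne u 1 with h1 | h1
    · exact ⟨2, 3, by omega, by omega, by omega, by omega, by omega⟩
    rcases eq_or_ne u 2 with h2 | h2
    · exact ⟨1, 3, by omega, by omega, by omega, by omega, by omega⟩
    · exact ⟨1, 2, by omega, by omega, by omega, Ne.symm h1, Ne.symm h2⟩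
  have hcΘ : 1 ≤ c ∧ c ≤ q - 1 ∧ c ≠ u := ⟨hc1, by omega, hcu⟩
  have hdΘ : 1 ≤ d ∧ d ≤ q - 1 ∧ d ≠ u := ⟨by omega, hdq, hdu⟩
  have hQc1 : (1:ℝ) < (q:ℝ) ^ c := one_lt_pow₀ hQ1 (by omega)
  have hQd1 : (1:ℝ) < (q:ℝ) ^ d := one_lt_pow₀ hQ1 (by omega)
  have hQcne : (q:ℝ) ^ c ≠ 0 := by positivity
  have hQdne : (q:ℝ) ^ d ≠ 0 := by positivity
  have hQc1ne : (q:ℝ) ^ c - 1 ≠ 0 := by linarith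
  have hQd1ne : (q:ℝ) ^ d - 1 ≠ 0 := by linarith
  have hcdR : (c:ℝ) < (d:ℝ) := by exact_mod_cast hcd
  -- the G and F values
  set gc : ℝ := ((c:ℝ) - u) / ((q:ℝ) ^ c - 1) with hgc
  set gd : ℝ := ((d:ℝ) - u) / ((q:ℝ) ^ d - 1) with hgd
  set g3 : ℝ := ((d:ℝ) - u) / (q:ℝ) ^ d + ((q:ℝ) ^ d)⁻¹ * gc with hg3
  set fc : ℝ := (c:ℝ) / ((q:ℝ) - 1) with hfc
  set fd : ℝ := (d:ℝ) / ((q:ℝ) - 1) with hfd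
  set f3 : ℝ := (d:ℝ) / (q:ℝ) + ((q:ℝ))⁻¹ * ((c:ℝ) / ((q:ℝ) - 1)) with hf3
  have hgcd : gc - gd ≠ 0 :=
    sub_ne_zero.mpr (div_ne hq hu hc1 hcd hdq hcu hdu)
  have h3c : g3 - gc = (((q:ℝ)^d - 1)/(q:ℝ)^d) * (gd - gc) := by
    have h := Lb ((q:ℝ)^d) ((d:ℝ) - u) gc hQdne hQd1ne
    rw [hg3, h, ← hgd]
  have h3d : g3 - gd = ((q:ℝ)^d)⁻¹ * (gc - gd) := by
    have h := La ((q:ℝ)^d) ((d:ℝ) - u) gc hQdne hQd1ne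
    rw [hg3, hgd, h]
  have h3cne : g3 - gc ≠ 0 := by
    rw [h3c]
    exact mul_ne_zero (div_ne_zero hQd1ne hQdne)
      (by rw [← neg_sub]; exact neg_ne_zero.mpr hgcd)
  have h3dne : g3 - gd ≠ 0 := by
    rw [h3d]; exact mul_ne_zero (inv_ne_zero hQdne) hgcd
  -- F differences
  have hf12 : fc - fd = ((c:ℝ) - d) / ((q:ℝ) - 1) := div_sub_div_same _ _ _
  have hf13 : fc - f3 = ((c:ℝ) - d) / (q:ℝ) := by
    rw [hfc, hf3]; field_simp; ring
  have hf23 : fd - f3 = ((d:ℝ) - c) / ((q:ℝ) * ((q:ℝ) - 1)) := by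
    rw [hfd, hf3]; field_simp; ring
  have habs12 : |fc - fd| = ((d:ℝ) - c) / ((q:ℝ) - 1) := by
    rw [hf12, abs_div, abs_of_pos (by linarith : (0:ℝ) < (q:ℝ) - 1),
      abs_sub_comm, abs_of_pos (by linarith : (0:ℝ) < (d:ℝ) - c)]
  have habs13 : |fc - f3| = ((d:ℝ) - c) / (q:ℝ) := by
    rw [hf13, abs_div, abs_of_pos hQ0,
      abs_sub_comm, abs_of_pos (by linarith : (0:ℝ) < (d:ℝ) - c)]
  have habs23 : |fd - f3| = ((d:ℝ) - c) / ((q:ℝ) * ((q:ℝ) - 1)) := by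
    rw [hf23, abs_div, abs_of_pos (by nlinarith : (0:ℝ) < (q:ℝ) * ((q:ℝ) - 1)),
      abs_of_pos (by linarith : (0:ℝ) < (d:ℝ) - c)]
  -- δ
  set δ : ℝ := ((d:ℝ) - c) / ((q:ℝ) * ((q:ℝ) - 1)) with hδdef
  have hδ : 0 < δ := by
    rw [hδdef]; exact div_pos (by linarith) (mul_pos hQ0 (by linarith))
  have hδ12 : δ ≤ |fc - fd| := by
    rw [habs12, hδdef]
    exact div_le_div_of_nonneg_left (by linarith) (by linarith)
      (le_mul_of_one_le_left (by linarith) (by linarith))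
  have hδ13 : δ ≤ |fc - f3| := by
    rw [habs13, hδdef]
    exact div_le_div_of_nonneg_left (by linarith) hQ0
      (le_mul_of_one_le_right (by linarith) (by linarith))
  have hδ23 : δ ≤ |fd - f3| := by rw [habs23]
  -- the quotient bound from hL
  have hball := hL (Metric.ball_mem_nhds L one_pos)
  rw [Filter.mem_map, Metric.mem_nhdsWithin_iff] at hball
  obtain ⟨ε, hε, hsub⟩ := hball
  set B : ℝ := |L| + 1 with hBdef
  have hB0 : (0:ℝ) < B := by
    have := abs_nonneg L; rw [hBdef]; linarith
  have hB : ∀ x, x ∈ Dset q u \ {x₀} → |x - x₀| < ε →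
      |(g x - g x₀) / (x - x₀)| ≤ B := by
    intro x hx hclose
    have hmem : x ∈ Metric.ball x₀ ε ∩ (Dset q u \ {x₀}) :=
      ⟨by rwa [Metric.mem_ball, Real.dist_eq], hx⟩
    have h2 := hsub hmem
    rw [Set.mem_preimage, Metric.mem_ball, Real.dist_eq] at h2
    have h3 := abs_sub_abs_le_abs_sub ((g x - g x₀) / (x - x₀)) L
    rw [hBdef]; linarith
  -- choose k
  obtain ⟨k, hk⟩ := pow_unbounded_of_one_lt ((4*B)/δ) hQ1
  have hkey : 4*B < δ * (q:ℝ)^k := by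
    rw [div_lt_iff₀ hδ] at hk; linarith
  -- growth of Psum
  have grow : ∀ j : ℕ, ∃ N, N + j ≤ Psum α N := by
    intro j; induction j with
    | zero => exact ⟨0, by simp [Psum]⟩
    | succ j ih =>
      obtain ⟨N, hN⟩ := ih
      obtain ⟨n, hnN, hn1⟩ := hev N
      have hα2 : 2 ≤ α n := by have := (hα n).1; omega
      have hmono := psum_mono_add (fun i => (hα i).1) N (n - N)
      rw [show N + (n - N) = n by omega] at hmono
      exact ⟨n + 1, by rw [psum_succ]; omega⟩
  -- choose M for ε-closeness
  have htend0 : Tendsto (fun N : ℕ => 2 * ((q:ℝ)⁻¹) ^ N) atTop (𝓝 0) := by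
    have h1 := (tendsto_pow_atTop_nhds_zero_of_lt_one
      (by positivity : (0:ℝ) ≤ (q:ℝ)⁻¹)
      (by rw [inv_lt_one_iff₀]; right; exact hQ1)).const_mul (2:ℝ)
    simpa using h1
  obtain ⟨M, hM⟩ := Filter.eventually_atTop.mp (htend0.eventually (gt_mem_nhds hε))
  -- choose N
  obtain ⟨N₁, hN₁⟩ := grow k
  set N : ℕ := max N₁ M with hNdef
  have hNM : M ≤ N := le_max_right _ _
  have hN₁N : N₁ ≤ N := le_max_left _ _
  have hPN : N + k ≤ Psum α N := by
    have hmono := psum_mono_add (fun i => (hα i).1) N₁ (N - N₁)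
    rw [show N₁ + (N - N₁) = N by omega] at hmono
    omega
  have hεN : 2 * ((q:ℝ)⁻¹) ^ N < ε := hM N hNM
  -- the pair bound
  have pairbound : ∀ τ τ' : ℕ → ℕ, ThetaSeq q u τ → ThetaSeq q u τ' →
      hmap q u (per α τ N) ≠ x₀ → hmap q u (per α τ' N) ≠ x₀ →
      δ ≤ |Phi q τ - Phi q τ'| → False := by
    intro τ τ' hτ hτ' hne hne' hδf
    have e1 := per_Phi_sub hq (fun n => (hα n).2.1) (fun n => (hτ n).2.1) N
    have e2 := per_Phi_sub hq (fun n => (hα n).2.1) (fun n => (hτ' n).2.1) N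
    have hgz : g (hmap q u (per α τ N)) - g (hmap q u (per α τ' N))
        = ((q:ℝ)^N)⁻¹ * (Phi q τ - Phi q τ') := by
      rw [hg _ (per_theta hα hτ N), hg _ (per_theta hα hτ' N)]
      linear_combination e1 - e2
    have hone : ∀ (σ : ℕ → ℕ), ThetaSeq q u σ → hmap q u (per α σ N) ≠ x₀ →
        |g (hmap q u (per α σ N)) - g x₀| ≤ B * (2 * ((q:ℝ)^(Psum α N))⁻¹) := by
      intro σ hσ hσne
      have hcz : |hmap q u (per α σ N) - x₀| ≤ 2 * ((q:ℝ)^(Psum α N))⁻¹ := by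
        rw [← hαx]; exact per_closeP hq hu hα hσ N
      have hεz : |hmap q u (per α σ N) - x₀| < ε := by
        have := per_close hq hu hα hσ N
        rw [hαx] at this; linarith
      have hquot := hB _ ⟨⟨per α σ N, per_theta hα hσ N, rfl⟩, hσne⟩ hεz
      have hrw : g (hmap q u (per α σ N)) - g x₀
          = ((g (hmap q u (per α σ N)) - g x₀)/(hmap q u (per α σ N) - x₀))
            * (hmap q u (per α σ N) - x₀) :=
        (div_mul_cancel₀ _ (sub_ne_zero.mpr hσne)).symm
      rw [hrw, abs_mul]
      exact mul_le_mul hquot hcz (abs_nonneg _) (le_of_lt hB0)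
    have h4 : |g (hmap q u (per α τ N)) - g (hmap q u (per α τ' N))|
        ≤ 4 * B * ((q:ℝ)^(Psum α N))⁻¹ := by
      have hh := abs_sub (g (hmap q u (per α τ N)) - g x₀)
        (g (hmap q u (per α τ' N)) - g x₀)
      have b1 := hone τ hτ hne
      have b2 := hone τ' hτ' hne'
      have : (g (hmap q u (per α τ N)) - g x₀) - (g (hmap q u (per α τ' N)) - g x₀)
          = g (hmap q u (per α τ N)) - g (hmap q u (per α τ' N)) := by ring
      rw [this] at hh
      linarith
    have h5 : δ * ((q:ℝ)^N)⁻¹ ≤ |g (hmap q u (per α τ N)) - g (hmap q u (per α τ' N))| := by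
      rw [hgz, abs_mul, abs_inv, abs_of_pos (pow_pos hQ0 N)]
      calc δ * ((q:ℝ)^N)⁻¹ = ((q:ℝ)^N)⁻¹ * δ := by ring
        _ ≤ ((q:ℝ)^N)⁻¹ * |Phi q τ - Phi q τ'| :=
            mul_le_mul_of_nonneg_left hδf (by positivity)
    have h6 : ((q:ℝ)^(Psum α N))⁻¹ ≤ ((q:ℝ)^N)⁻¹ * ((q:ℝ)^k)⁻¹ := by
      rw [← mul_inv, ← pow_add]
      exact inv_anti₀ (pow_pos hQ0 _) (pow_le_pow_right₀ hQ1.le hPN)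
    have h7 : δ * ((q:ℝ)^N)⁻¹ ≤ (4 * B * ((q:ℝ)^k)⁻¹) * ((q:ℝ)^N)⁻¹ := by
      have h8 : 4 * B * ((q:ℝ)^(Psum α N))⁻¹
          ≤ 4 * B * (((q:ℝ)^N)⁻¹ * ((q:ℝ)^k)⁻¹) :=
        mul_le_mul_of_nonneg_left h6 (by linarith)
      calc δ * ((q:ℝ)^N)⁻¹ ≤ 4 * B * ((q:ℝ)^(Psum α N))⁻¹ := le_trans h5 h4
        _ ≤ 4 * B * (((q:ℝ)^N)⁻¹ * ((q:ℝ)^k)⁻¹) := h8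
        _ = (4 * B * ((q:ℝ)^k)⁻¹) * ((q:ℝ)^N)⁻¹ := by ring
    have h9 : δ ≤ 4 * B * ((q:ℝ)^k)⁻¹ :=
      le_of_mul_le_mul_right h7 (by positivity)
    have h10 : δ * (q:ℝ)^k ≤ 4 * B := by
      have := mul_le_mul_of_nonneg_right h9 (le_of_lt (pow_pos hQ0 k))
      rwa [mul_assoc, inv_mul_cancel₀ (by positivity : ((q:ℝ)^k) ≠ 0), mul_one] at this
    linarith
  -- the three points
  have hzdiff : ∀ τ : ℕ → ℕ, ThetaSeq q u τ →
      hmap q u (per α τ N) - x₀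
        = ((q:ℝ)^(Psum α N))⁻¹ * (g0 q u τ - g0 q u (fun m => α (N + m))) := by
    intro τ hτ
    rw [← hαx]; exact per_hmap_sub hq hu hα hτ N
  have hG1 : g0 q u (fun _ => c) = gc := by rw [g0_const hq c hc1, hgc]
  have hG2 : g0 q u (fun _ => d) = gd := by rw [g0_const hq d (by omega), hgd]
  have hG3 : g0 q u (consSeq d c) = g3 := by
    rw [g0_cons hq hu hdΘ hcΘ, hg3, hgc]
  have hF1 : Phi q (fun _ => c) = fc := by rw [Phi_const hq c, hfc]
  have hF2 : Phi q (fun _ => d) = fd := by rw [Phi_const hq d, hfd]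
  have hF3 : Phi q (consSeq d c) = f3 := by
    rw [Phi_cons hq hdq (by omega), hf3]
  have hθ1 : ThetaSeq q u (fun _ => c) := const_theta hcΘ
  have hθ2 : ThetaSeq q u (fun _ => d) := const_theta hdΘ
  have hθ3 : ThetaSeq q u (consSeq d c) := consSeq_theta hdΘ hcΘ
  have hQPne : ((q:ℝ)^(Psum α N))⁻¹ ≠ 0 := by positivity
  -- z_i pairwise distinct
  have hz12 : hmap q u (per α (fun _ => c) N) ≠ hmap q u (per α (fun _ => d) N) := by
    intro h
    have e1 := hzdiff _ hθ1; have e2 := hzdiff _ hθ2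
    rw [hG1] at e1; rw [hG2] at e2
    have : (0:ℝ) = ((q:ℝ)^(Psum α N))⁻¹ * (gc - gd) := by
      rw [h] at e1; linear_combination e1 - e2
    exact (mul_ne_zero hQPne hgcd) this.symm
  have hz13 : hmap q u (per α (fun _ => c) N) ≠ hmap q u (per α (consSeq d c) N) := by
    intro h
    have e1 := hzdiff _ hθ1; have e2 := hzdiff _ hθ3
    rw [hG1] at e1; rw [hG3] at e2
    have : (0:ℝ) = ((q:ℝ)^(Psum α N))⁻¹ * (gc - g3) := by
      rw [h] at e1; linear_combination e1 - e2
    refine (mul_ne_zero hQPne ?_) this.symm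
    rw [← neg_sub]; exact neg_ne_zero.mpr h3cne
  have hz23 : hmap q u (per α (fun _ => d) N) ≠ hmap q u (per α (consSeq d c) N) := by
    intro h
    have e1 := hzdiff _ hθ2; have e2 := hzdiff _ hθ3
    rw [hG2] at e1; rw [hG3] at e2
    have : (0:ℝ) = ((q:ℝ)^(Psum α N))⁻¹ * (gd - g3) := by
      rw [h] at e1; linear_combination e1 - e2
    refine (mul_ne_zero hQPne ?_) this.symm
    rw [← neg_sub]; exact neg_ne_zero.mpr h3dne
  -- pick the pair
  by_cases h1 : hmap q u (per α (fun _ => c) N) = x₀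
  · -- use pair (2,3)
    refine pairbound (fun _ => d) (consSeq d c) hθ2 hθ3 ?_ ?_ ?_
    · rw [← h1]; exact fun h => hz12 h.symm
    · rw [← h1]; exact fun h => hz13 h.symm
    · rw [hF2, hF3]; exact hδ23
  by_cases h2 : hmap q u (per α (fun _ => d) N) = x₀
  · -- use pair (1,3)
    refine pairbound (fun _ => c) (consSeq d c) hθ1 hθ3 h1 ?_ ?_
    · rw [← h2]; exact fun h => hz23 h.symm
    · rw [hF1, hF3]; exact hδ13
  · -- use pair (1,2)
    refine pairbound (fun _ => c) (fun _ => d) hθ1 hθ2 h1 h2 ?_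
    rw [hF1, hF2]; exact hδ12


/-- `g` (any function on `ℝ` satisfying `g(h(α)) = Φ(α)`) is nowhere
differentiable on `D`: at no point `x₀ ∈ D` does the difference quotient
`(g(x) - g(x₀))/(x - x₀)` tend to a limit as `x → x₀` within `D \ {x₀}`. -/
theorem stmt17 (q : ℕ) (hq : 4 ≤ q) (u : ℕ) (hu : u ≤ q - 1)
    (g : ℝ → ℝ) (hg : ∀ α, ThetaSeq q u α → g (hmap q u α) = Phi q α)
    (x₀ : ℝ) (hx₀ : x₀ ∈ Dset q u) :
    ¬ ∃ L : ℝ,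
      Tendsto (fun x => (g x - g x₀) / (x - x₀))
        (nhdsWithin x₀ (Dset q u \ {x₀})) (nhds L) := by
  rintro ⟨L, hL⟩
  obtain ⟨α, hα, hαx⟩ := hx₀
  by_cases hev : ∃ N₀ : ℕ, ∀ n, N₀ ≤ n → α n = 1
  · obtain ⟨N₀, hN₀⟩ := hev
    exact caseB q hq u hu g hg x₀ α hα hαx L hL N₀ hN₀
  · push_neg at hev
    exact caseA q hq u hu g hg x₀ α hα hαx L hL hev
end

section
/- For every α ∈ Θ^{ℕ≥1}, letting α' denote the shifted sequence α'_n = α_{n+1}, one has Φ(α') = q·Φ(α) − α_1 and h(α') = u/(q−1) + q^{α_1}·( h(α) − u/(q−1) ) − (α_1 − u). (These identities express the commutation relation g(σ^{α_1}(x)) = σ(g(x)) between g and the shift operators of the corresponding expansions.) -/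
open Filter Topology MeasureTheory

/-- for every `α ∈ Θ^{ℕ≥1}`, with `α'` the shifted sequence
`α'_n = α_{n+1}`, one has `Φ(α') = q Φ(α) - α_1` and
`h(α') = u/(q-1) + q^{α_1} (h(α) - u/(q-1)) - (α_1 - u)`. -/
theorem stmt18 (q : ℕ) (hq : 4 ≤ q) (u : ℕ) (hu : u ≤ q - 1)
    (α : ℕ → ℕ) (hα : ThetaSeq q u α) :
    Phi q (fun n => α (n + 1)) = (q : ℝ) * Phi q α - (α 0 : ℝ) ∧
    hmap q u (fun n => α (n + 1)) =
      (u : ℝ) / ((q : ℝ) - 1) +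
        (q : ℝ) ^ (α 0) * (hmap q u α - (u : ℝ) / ((q : ℝ) - 1)) -
        ((α 0 : ℝ) - (u : ℝ)) := by
  have hq1 : (1:ℝ) < (q:ℝ) := by
    have : (4:ℝ) ≤ (q:ℝ) := by exact_mod_cast hq
    linarith
  have hq0 : (0:ℝ) < (q:ℝ) := by linarith
  have hqne : (q:ℝ) ≠ 0 := ne_of_gt hq0
  have hgeo : Summable (fun n : ℕ => (1/(q:ℝ))^n) :=
    summable_geometric_of_lt_one (by positivity) (by rw [div_lt_one hq0]; linarith)
  have hb : ∀ n, (α n:ℝ) ≤ (q:ℝ) := by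
    intro n
    have h1 : α n ≤ q - 1 := (hα n).2.1
    have : α n ≤ q := le_trans h1 (Nat.sub_le _ _)
    exact_mod_cast this
  have hu' : (u:ℝ) ≤ (q:ℝ) := by
    have : u ≤ q := le_trans hu (Nat.sub_le _ _)
    exact_mod_cast this
  have hun : (0:ℝ) ≤ (u:ℝ) := Nat.cast_nonneg u
  have key : ∀ {n : ℕ}, (q:ℝ)/(q:ℝ)^(n+1) = (1/(q:ℝ))^n := by
    intro n
    rw [one_div, inv_pow, pow_succ]
    field_simp
  have hsum1 : Summable (fun n : ℕ => (α n:ℝ)/(q:ℝ)^(n+1)) := by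
    apply Summable.of_nonneg_of_le (fun n => by positivity) _ hgeo
    intro n
    calc (α n:ℝ)/(q:ℝ)^(n+1) ≤ (q:ℝ)/(q:ℝ)^(n+1) := by gcongr; exact le_trans (hα n).2.1 (Nat.sub_le _ _)
    _ = (1/(q:ℝ))^n := key
  have hSge : ∀ n, n+1 ≤ Ssum α n := by
    intro n
    calc n+1 = ∑ _i ∈ Finset.range (n+1), 1 := by simp
    _ ≤ Ssum α n := Finset.sum_le_sum (fun i _ => (hα i).1)
  have habs : ∀ n, |((α n:ℝ) - u)/(q:ℝ)^(Ssum α n)| ≤ (1/(q:ℝ))^n := by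
    intro n
    rw [abs_div, abs_of_pos (by positivity : (0:ℝ) < (q:ℝ)^(Ssum α n))]
    have h1 : |((α n:ℝ) - u)| ≤ (q:ℝ) := by
      have h0 : (0:ℝ) ≤ (α n:ℝ) := Nat.cast_nonneg _
      have hbn := hb n
      rw [abs_le]
      exact ⟨by linarith, by linarith⟩
    calc |((α n:ℝ) - u)|/(q:ℝ)^(Ssum α n) ≤ (q:ℝ)/(q:ℝ)^(Ssum α n) := by gcongr
    _ ≤ (q:ℝ)/(q:ℝ)^(n+1) := by
        gcongr
        · linarith
        · exact hSge n
    _ = (1/(q:ℝ))^n := key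
  have hsum2 : Summable (fun n : ℕ => ((α n:ℝ) - u)/(q:ℝ)^(Ssum α n)) := by
    apply Summable.of_abs
    exact Summable.of_nonneg_of_le (fun n => abs_nonneg _) habs hgeo
  constructor
  · -- Phi part
    have e2 : ∑' n : ℕ, (α (n+1):ℝ)/(q:ℝ)^(n+1+1) = Phi q α - (α 0:ℝ)/(q:ℝ) := by
      have h := Summable.tsum_eq_zero_add hsum1
      unfold Phi
      rw [h]
      ring
    have e1 : Phi q (fun n => α (n+1)) = (q:ℝ) * ∑' n : ℕ, (α (n+1):ℝ)/(q:ℝ)^(n+1+1) := by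
      unfold Phi
      rw [← tsum_mul_left]
      congr 1
      funext n
      show (α (n+1):ℝ)/(q:ℝ)^(n+1) = (q:ℝ) * ((α (n+1):ℝ)/(q:ℝ)^(n+1+1))
      field_simp
      ring
    rw [e1, e2]
    field_simp
  · -- h part
    have hS' : ∀ n, Ssum (fun m => α (m+1)) n + α 0 = Ssum α (n+1) := by
      intro n
      unfold Ssum
      rw [Finset.sum_range_succ' (fun i => α i) (n+1)]
    have hS0 : Ssum α 0 = α 0 := by
      simp [Ssum]
    have e3 : ∀ n : ℕ, ((α (n+1):ℝ) - u)/(q:ℝ)^(Ssum (fun m => α (m+1)) n)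
        = (q:ℝ)^(α 0) * (((α (n+1):ℝ) - u)/(q:ℝ)^(Ssum α (n+1))) := by
      intro n
      rw [← hS' n, pow_add]
      field_simp
    have e4 : ∑' n : ℕ, ((α (n+1):ℝ) - u)/(q:ℝ)^(Ssum α (n+1))
        = (∑' n : ℕ, ((α n:ℝ) - u)/(q:ℝ)^(Ssum α n)) - ((α 0:ℝ) - u)/(q:ℝ)^(α 0) := by
      have h := Summable.tsum_eq_zero_add hsum2
      rw [h, hS0]
      ring
    have e5 : hmap q u (fun n => α (n+1)) = (u:ℝ)/((q:ℝ)-1) +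
        ∑' n : ℕ, (q:ℝ)^(α 0) * (((α (n+1):ℝ) - u)/(q:ℝ)^(Ssum α (n+1))) := by
      unfold hmap
      congr 1
      exact tsum_congr e3
    rw [e5, tsum_mul_left, e4]
    unfold hmap
    have hqp : (q:ℝ)^(α 0) ≠ 0 := by positivity
    field_simp
    ring
end

section
/- The graph Γ = {(h(α), Φ(α)) : α ∈ Θ^{ℕ≥1}} ⊆ ℝ² of the function g has Hausdorff dimension at most 1. -/
open Filter Topology MeasureTheory

/-! ### Auxiliary lemmas -/

/-- Summability from a geometric bound on absolute values. -/
lemma summable_of_abs_le_geom {f : ℕ → ℝ} {C r : ℝ} (hr0 : 0 ≤ r) (hr1 : r < 1)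
    (hb : ∀ k, |f k| ≤ C * r ^ k) : Summable f := by
  have hgs : Summable (fun k : ℕ => C * r ^ k) :=
    (summable_geometric_of_lt_one hr0 hr1).mul_left C
  exact Summable.of_abs (hgs.of_nonneg_of_le (fun k => abs_nonneg _) hb)

/-- Tail bound for a series with geometric bounds whose first `n` terms vanish. -/
lemma abs_tsum_le_tail {f : ℕ → ℝ} {C r : ℝ} (hC : 0 ≤ C) (hr0 : 0 ≤ r) (hr1 : r < 1)
    (n : ℕ) (h0 : ∀ k < n, f k = 0) (hb : ∀ k, |f k| ≤ C * r ^ k) :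
    |∑' k, f k| ≤ C * r ^ n / (1 - r) := by
  have hf : Summable f := summable_of_abs_le_geom hr0 hr1 hb
  have key : ∑' k, f k = ∑' k, f (k + n) := by
    rw [← Summable.sum_add_tsum_nat_add n hf,
      Finset.sum_eq_zero (fun i hi => h0 i (Finset.mem_range.mp hi)), zero_add]
  have habs0 : Summable fun k => |f k| :=
    ((summable_geometric_of_lt_one hr0 hr1).mul_left C).of_nonneg_of_le
      (fun k => abs_nonneg _) hb
  have habs : Summable fun k => |f (k + n)| := (summable_nat_add_iff n).2 habs0
  have hgs : Summable (fun k : ℕ => C * r ^ n * r ^ k) :=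
    (summable_geometric_of_lt_one hr0 hr1).mul_left _
  rw [key]
  have h1 : |∑' k, f (k + n)| ≤ ∑' k, |f (k + n)| := by
    simpa only [Real.norm_eq_abs] using
      norm_tsum_le_tsum_norm (f := fun k => f (k + n))
        (by simpa only [Real.norm_eq_abs] using habs)
  have h2 : ∑' k, |f (k + n)| ≤ ∑' k : ℕ, C * r ^ n * r ^ k := by
    refine Summable.tsum_le_tsum (fun k => ?_) habs hgs
    calc |f (k + n)| ≤ C * r ^ (k + n) := hb _
      _ = C * r ^ n * r ^ k := by rw [pow_add]; ring
  have h3 : ∑' k : ℕ, C * r ^ n * r ^ k = C * r ^ n / (1 - r) := by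
    rw [tsum_mul_left, tsum_geometric_of_lt_one hr0 hr1, div_eq_mul_inv]
  linarith

lemma Ssum_ge {q u : ℕ} {α : ℕ → ℕ} (hα : ThetaSeq q u α) (k : ℕ) :
    k + 1 ≤ Ssum α k := by
  have : ∑ _i ∈ Finset.range (k + 1), 1 ≤ ∑ i ∈ Finset.range (k + 1), α i :=
    Finset.sum_le_sum fun i _ => (hα i).1
  simpa [Ssum] using this

lemma cast_le_qsub1 {q u : ℕ} {α : ℕ → ℕ} (hq : 4 ≤ q) (hα : ThetaSeq q u α) (k : ℕ) :
    (α k : ℝ) ≤ (q : ℝ) - 1 := by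
  have h1 : (1 : ℕ) ≤ q := by omega
  have := (hα k).2.1
  have : (α k : ℝ) ≤ ((q - 1 : ℕ) : ℝ) := Nat.cast_le.mpr this
  rwa [Nat.cast_sub h1, Nat.cast_one] at this

lemma hterm_bound {q u : ℕ} (hq : 4 ≤ q) (hu : u ≤ q - 1) {α : ℕ → ℕ}
    (hα : ThetaSeq q u α) (k : ℕ) :
    |((α k : ℝ) - (u : ℝ)) / (q : ℝ) ^ (Ssum α k)| ≤
      (((q : ℝ) - 1) * (q : ℝ)⁻¹) * ((q : ℝ)⁻¹) ^ k := by
  have hQ0 : (0 : ℝ) < q := by positivity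
  have hQ1 : (1 : ℝ) < q := by exact_mod_cast (by omega : 1 < q)
  have hu' : (u : ℝ) ≤ (q : ℝ) - 1 := by
    have h1 : (1 : ℕ) ≤ q := by omega
    have : (u : ℝ) ≤ ((q - 1 : ℕ) : ℝ) := Nat.cast_le.mpr hu
    rwa [Nat.cast_sub h1, Nat.cast_one] at this
  have hnum : |(α k : ℝ) - (u : ℝ)| ≤ (q : ℝ) - 1 := by
    rw [abs_sub_le_iff]
    constructor
    · have := cast_le_qsub1 hq hα k
      have hu0 : (0 : ℝ) ≤ u := Nat.cast_nonneg u
      linarith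
    · have h0 : (0 : ℝ) ≤ (α k : ℝ) := Nat.cast_nonneg _
      linarith
  have hpow : ((q : ℝ) ^ (Ssum α k))⁻¹ ≤ ((q : ℝ)⁻¹) ^ (k + 1) := by
    rw [← inv_pow]
    exact pow_le_pow_of_le_one (by positivity) (inv_le_one_of_one_le₀ hQ1.le) (Ssum_ge hα k)
  have hppos : (0 : ℝ) < (q : ℝ) ^ (Ssum α k) := by positivity
  rw [abs_div, abs_of_pos hppos, div_eq_mul_inv]
  calc |(α k : ℝ) - (u : ℝ)| * ((q : ℝ) ^ (Ssum α k))⁻¹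
      ≤ ((q : ℝ) - 1) * ((q : ℝ)⁻¹) ^ (k + 1) := by
        exact mul_le_mul hnum hpow (by positivity) (by linarith)
    _ = (((q : ℝ) - 1) * (q : ℝ)⁻¹) * ((q : ℝ)⁻¹) ^ k := by rw [pow_succ]; ring

lemma phiterm_bound {q u : ℕ} (hq : 4 ≤ q) {α : ℕ → ℕ}
    (hα : ThetaSeq q u α) (k : ℕ) :
    |(α k : ℝ) / (q : ℝ) ^ (k + 1)| ≤
      (((q : ℝ) - 1) * (q : ℝ)⁻¹) * ((q : ℝ)⁻¹) ^ k := by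
  have hQ0 : (0 : ℝ) < q := by positivity
  have hppos : (0 : ℝ) < (q : ℝ) ^ (k + 1) := by positivity
  rw [abs_div, abs_of_pos hppos, abs_of_nonneg (Nat.cast_nonneg _), div_eq_mul_inv, ← inv_pow]
  calc (α k : ℝ) * ((q : ℝ)⁻¹) ^ (k + 1)
      ≤ ((q : ℝ) - 1) * ((q : ℝ)⁻¹) ^ (k + 1) :=
        mul_le_mul_of_nonneg_right (cast_le_qsub1 hq hα k) (by positivity)
    _ = (((q : ℝ) - 1) * (q : ℝ)⁻¹) * ((q : ℝ)⁻¹) ^ k := by rw [pow_succ]; ring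

/-- The key Lipschitz estimate: `|h(α) - h(β)| ≤ 2q(q-1)|Φ(α) - Φ(β)|`. -/
lemma key_lip {q u : ℕ} (hq : 4 ≤ q) (hu : u ≤ q - 1) {α β : ℕ → ℕ}
    (hα : ThetaSeq q u α) (hβ : ThetaSeq q u β) :
    |hmap q u α - hmap q u β| ≤ 2 * q * ((q : ℝ) - 1) * |Phi q α - Phi q β| := by
  have hQ0 : (0 : ℝ) < q := by positivity
  have hQ4 : (4 : ℝ) ≤ q := by exact_mod_cast hq
  have hQ1 : (1 : ℝ) < q := by linarith
  set r : ℝ := (q : ℝ)⁻¹ with hr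
  have hr0 : 0 ≤ r := by positivity
  have hr1 : r < 1 := by
    rw [hr]
    exact inv_lt_one_of_one_lt₀ hQ1
  have hrq : (1 : ℝ) - r = ((q : ℝ) - 1) * r := by
    rw [hr]
    field_simp
  have hC0 : (0 : ℝ) ≤ ((q : ℝ) - 1) * r := by
    apply mul_nonneg _ hr0; linarith
  by_cases hab : α = β
  · subst hab
    simp only [sub_self, abs_zero, mul_zero]
    positivity
  · have hex : ∃ i, α i ≠ β i := by
      by_contra h
      push_neg at h
      exact hab (funext h)
    set n := Nat.find hex with hn
    have hne : α n ≠ β n := Nat.find_spec hex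
    have hlt : ∀ i < n, α i = β i := fun i hi => by
      have := Nat.find_min hex hi
      omega
    -- the hmap-difference bound
    have hsumα := summable_of_abs_le_geom hr0 hr1 (hterm_bound hq hu hα)
    have hsumβ := summable_of_abs_le_geom hr0 hr1 (hterm_bound hq hu hβ)
    have hmapd : hmap q u α - hmap q u β =
        ∑' k : ℕ, (((α k : ℝ) - u) / (q : ℝ) ^ (Ssum α k)
          - ((β k : ℝ) - u) / (q : ℝ) ^ (Ssum β k)) := by
      rw [Summable.tsum_sub hsumα hsumβ, hmap, hmap]; ring
    have hH : |hmap q u α - hmap q u β| ≤ 2 * (((q : ℝ) - 1) * r) * r ^ n / (1 - r) := by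
      rw [hmapd]
      apply abs_tsum_le_tail (by linarith) hr0 hr1 n
      · intro k hk
        have hSk : Ssum α k = Ssum β k := by
          unfold Ssum
          exact Finset.sum_congr rfl fun i hi =>
            hlt i (lt_of_lt_of_le (Finset.mem_range.mp hi) hk)
        rw [hlt k hk, hSk, sub_self]
      · intro k
        calc |((α k : ℝ) - u) / (q : ℝ) ^ (Ssum α k)
              - ((β k : ℝ) - u) / (q : ℝ) ^ (Ssum β k)|
            ≤ |((α k : ℝ) - u) / (q : ℝ) ^ (Ssum α k)|
              + |((β k : ℝ) - u) / (q : ℝ) ^ (Ssum β k)| := abs_sub _ _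
          _ ≤ (((q : ℝ) - 1) * r) * r ^ k + (((q : ℝ) - 1) * r) * r ^ k :=
              add_le_add (hterm_bound hq hu hα k) (hterm_bound hq hu hβ k)
          _ = 2 * (((q : ℝ) - 1) * r) * r ^ k := by ring
    -- the Phi-difference lower bound
    set f : ℕ → ℝ := fun k => (α k : ℝ) / (q : ℝ) ^ (k + 1) - (β k : ℝ) / (q : ℝ) ^ (k + 1)
      with hf
    have hsumf : Summable f :=
      (summable_of_abs_le_geom hr0 hr1 (phiterm_bound hq hα)).sub
        (summable_of_abs_le_geom hr0 hr1 (phiterm_bound hq hβ))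
    have hphid : Phi q α - Phi q β = ∑' k, f k := by
      rw [hf, Summable.tsum_sub (summable_of_abs_le_geom hr0 hr1 (phiterm_bound hq hα))
        (summable_of_abs_le_geom hr0 hr1 (phiterm_bound hq hβ)), Phi, Phi]
    have hfb : ∀ k, |f k| ≤ (((q : ℝ) - 2) * r) * r ^ k := by
      intro k
      have h1 : (1 : ℝ) ≤ (α k : ℝ) := by exact_mod_cast (hα k).1
      have h2 : (1 : ℝ) ≤ (β k : ℝ) := by exact_mod_cast (hβ k).1
      have h3 := cast_le_qsub1 hq hα k
      have h4 := cast_le_qsub1 hq hβ k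
      have hppos : (0 : ℝ) < (q : ℝ) ^ (k + 1) := by positivity
      have : f k = ((α k : ℝ) - (β k : ℝ)) / (q : ℝ) ^ (k + 1) := by rw [hf]; ring
      rw [this, abs_div, abs_of_pos hppos, div_eq_mul_inv, ← inv_pow]
      have hnum : |(α k : ℝ) - (β k : ℝ)| ≤ (q : ℝ) - 2 := by
        rw [abs_sub_le_iff]; constructor <;> linarith
      calc |(α k : ℝ) - (β k : ℝ)| * ((q : ℝ)⁻¹) ^ (k + 1)
          ≤ ((q : ℝ) - 2) * ((q : ℝ)⁻¹) ^ (k + 1) :=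
            mul_le_mul_of_nonneg_right hnum (by positivity)
        _ = (((q : ℝ) - 2) * r) * r ^ k := by rw [pow_succ, hr]; ring
    -- split off the n-th term
    have hsplit : ∑' k, f k = f n + ∑' k, f (k + (n + 1)) := by
      rw [← Summable.sum_add_tsum_nat_add (n + 1) hsumf]
      congr 1
      rw [Finset.sum_eq_single_of_mem n (Finset.self_mem_range_succ n)]
      intro i hi hine
      have : i < n := by
        have := Finset.mem_range.mp hi; omega
      rw [hf]
      simp [hlt i this]
    have hT : |∑' k, f (k + (n + 1))| ≤ (((q : ℝ) - 2) * r * r ^ (n + 1)) / (1 - r) := by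
      have hq2 : (0 : ℝ) ≤ (q : ℝ) - 2 := by linarith
      have hCnn : (0 : ℝ) ≤ ((q : ℝ) - 2) * r * r ^ (n + 1) :=
        mul_nonneg (mul_nonneg hq2 hr0) (pow_nonneg hr0 _)
      have := abs_tsum_le_tail (f := fun k => f (k + (n + 1)))
        (C := ((q : ℝ) - 2) * r * r ^ (n + 1)) hCnn hr0 hr1 0
        (fun k hk => absurd hk (Nat.not_lt_zero k)) ?_
      · simpa using this
      · intro k
        calc |f (k + (n + 1))| ≤ (((q : ℝ) - 2) * r) * r ^ (k + (n + 1)) := hfb _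
          _ = ((q : ℝ) - 2) * r * r ^ (n + 1) * r ^ k := by rw [pow_add]; ring
    have hfn : r ^ (n + 1) ≤ |f n| := by
      have hppos : (0 : ℝ) < (q : ℝ) ^ (n + 1) := by positivity
      have : f n = ((α n : ℝ) - (β n : ℝ)) / (q : ℝ) ^ (n + 1) := by rw [hf]; ring
      rw [this, abs_div, abs_of_pos hppos, div_eq_mul_inv, ← inv_pow]
      have hnum : (1 : ℝ) ≤ |(α n : ℝ) - (β n : ℝ)| := by
        rcases Nat.lt_or_ge (α n) (β n) with h | h
        · have : (α n : ℝ) + 1 ≤ (β n : ℝ) := by exact_mod_cast h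
          rw [abs_sub_comm, abs_of_nonneg (by linarith)]; linarith
        · have hlt' : β n < α n := lt_of_le_of_ne h (Ne.symm hne)
          have : (β n : ℝ) + 1 ≤ (α n : ℝ) := by exact_mod_cast hlt'
          rw [abs_of_nonneg (by linarith)]; linarith
      calc r ^ (n + 1) = 1 * ((q : ℝ)⁻¹) ^ (n + 1) := by rw [hr, one_mul]
        _ ≤ |(α n : ℝ) - (β n : ℝ)| * ((q : ℝ)⁻¹) ^ (n + 1) :=
          mul_le_mul_of_nonneg_right hnum (by positivity)
    have hPhiLB : r ^ (n + 1) - (((q : ℝ) - 2) * r * r ^ (n + 1)) / (1 - r)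
        ≤ |Phi q α - Phi q β| := by
      rw [hphid, hsplit]
      have h1 : |f n| ≤ |f n + ∑' k, f (k + (n + 1))| + |∑' k, f (k + (n + 1))| := by
        have h2 := abs_sub (f n + ∑' k, f (k + (n + 1))) (∑' k, f (k + (n + 1)))
        simpa only [add_sub_cancel_right] using h2
      linarith
    -- combine
    have hrne : (1 : ℝ) - r ≠ 0 := by
      have : (0:ℝ) < 1 - r := by linarith
      linarith [this.ne']
    have hq1ne : (q : ℝ) - 1 ≠ 0 := by linarith
    have hqne : (q : ℝ) ≠ 0 := by linarith
    have heq1 : 2 * (((q : ℝ) - 1) * r) * r ^ n / (1 - r)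
        = 2 * q * ((q : ℝ) - 1) *
          (r ^ (n + 1) - (((q : ℝ) - 2) * r * r ^ (n + 1)) / (1 - r)) := by
      rw [hrq, pow_succ, hr]
      field_simp
      ring
    calc |hmap q u α - hmap q u β|
        ≤ 2 * (((q : ℝ) - 1) * r) * r ^ n / (1 - r) := hH
      _ = 2 * q * ((q : ℝ) - 1) *
          (r ^ (n + 1) - (((q : ℝ) - 2) * r * r ^ (n + 1)) / (1 - r)) := heq1
      _ ≤ 2 * q * ((q : ℝ) - 1) * |Phi q α - Phi q β| := by
          have hnn : (0 : ℝ) ≤ 2 * q * ((q : ℝ) - 1) := by nlinarith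
          exact mul_le_mul_of_nonneg_left hPhiLB hnn

/-- If two Θ-sequences have the same `Φ`-value then they have the same `h`-value. -/
lemma hmap_well_defined {q u : ℕ} (hq : 4 ≤ q) (hu : u ≤ q - 1) {α β : ℕ → ℕ}
    (hα : ThetaSeq q u α) (hβ : ThetaSeq q u β) (h : Phi q α = Phi q β) :
    hmap q u α = hmap q u β := by
  have := key_lip hq hu hα hβ
  rw [h, sub_self, abs_zero, mul_zero] at this
  have h0 : |hmap q u α - hmap q u β| = 0 := le_antisymm this (abs_nonneg _)
  have := abs_eq_zero.mp h0
  linarith [sub_eq_zero.mp this]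

-- The `g` function on `E`, defined via choice.
open Classical in
noncomputable def gfun (q u : ℕ) (y : ℝ) : ℝ :=
  if h : ∃ α, ThetaSeq q u α ∧ Phi q α = y then hmap q u h.choose else 0

lemma gfun_eq {q u : ℕ} (hq : 4 ≤ q) (hu : u ≤ q - 1) {α : ℕ → ℕ}
    (hα : ThetaSeq q u α) : gfun q u (Phi q α) = hmap q u α := by
  have hmem : ∃ β, ThetaSeq q u β ∧ Phi q β = Phi q α := ⟨α, hα, rfl⟩
  rw [gfun]
  rw [dif_pos hmem]
  exact hmap_well_defined hq hu hmem.choose_spec.1 hα hmem.choose_spec.2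

/-- the graph `Γ = {(h(α), Φ(α)) : α ∈ Θ^{ℕ≥1}} ⊆ ℝ²` of `g` has
Hausdorff dimension at most 1. -/
theorem stmt19 (q : ℕ) (hq : 4 ≤ q) (u : ℕ) (hu : u ≤ q - 1) :
    dimH {p : ℝ × ℝ | ∃ α, ThetaSeq q u α ∧ p = (hmap q u α, Phi q α)} ≤ 1 := by
  set K : NNReal := Real.toNNReal (2 * q * ((q : ℝ) - 1)) with hK
  have hQ4 : (4 : ℝ) ≤ q := by exact_mod_cast hq
  have hKcoe : (K : ℝ) = 2 * q * ((q : ℝ) - 1) := by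
    rw [hK, Real.coe_toNNReal]
    nlinarith
  set F : ℝ → ℝ × ℝ := fun y => (gfun q u y, y) with hF
  have hsub : {p : ℝ × ℝ | ∃ α, ThetaSeq q u α ∧ p = (hmap q u α, Phi q α)}
      ⊆ F '' (Eset q u) := by
    rintro p ⟨α, hα, rfl⟩
    exact ⟨Phi q α, ⟨α, hα, rfl⟩, by rw [hF]; simp [gfun_eq hq hu hα]⟩
  have hlip1 : LipschitzOnWith K (gfun q u) (Eset q u) := by
    apply LipschitzOnWith.of_dist_le_mul
    intro x hx y hy
    obtain ⟨α, hα, rfl⟩ := hx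
    obtain ⟨β, hβ, rfl⟩ := hy
    rw [gfun_eq hq hu hα, gfun_eq hq hu hβ, Real.dist_eq, Real.dist_eq, hKcoe]
    exact key_lip hq hu hα hβ
  have hlip2 : LipschitzOnWith 1 (fun y : ℝ => y) (Eset q u) := by
    intro x _ y _
    simpa using le_refl (edist x y)
  have hlip : LipschitzOnWith (max K 1) F (Eset q u) := hlip1.prodMk hlip2
  calc dimH {p : ℝ × ℝ | ∃ α, ThetaSeq q u α ∧ p = (hmap q u α, Phi q α)}
      ≤ dimH (F '' Eset q u) := dimH_mono hsub
    _ ≤ dimH (Eset q u) := hlip.dimH_image_le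
    _ ≤ dimH (Set.univ : Set ℝ) := dimH_mono (Set.subset_univ _)
    _ = 1 := Real.dimH_univ
end
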